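/- arXiv:0805.0816 — 5 statements merged into one kernel-verified Lean document; each statement's English description precedes it below -/
import Mathlib

section
/- For Schwartz functions f, g : ℝ → ℂ, the double integral of the Wigner transform recovers the inner product: ∫∫ W(f,g)(x,ξ) dx dξ = 2√π · ⟨f, g⟩, where ⟨f, g⟩ = ∫ conj(f(x)) g(x) dx. -/
open MeasureTheory

/-- One-dimensional Wigner transform. -/
noncomputable def Wig (f g : ℝ → ℂ) (x ξ : ℝ) : ℂ :=
  (Real.sqrt (2 * Real.pi) : ℂ)⁻¹ *
    ∫ p : ℝ, Complex.exp (Complex.I * p * ξ) *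
      (starRingEnd ℂ) (f ((x + p) / Real.sqrt 2)) * g ((x - p) / Real.sqrt 2)

/-- Extended Wigner transform of a function of two variables. -/
noncomputable def ExtW (F : ℝ → ℝ → ℂ) (x ξ : ℝ) : ℂ :=
  (Real.sqrt (2 * Real.pi) : ℂ)⁻¹ *
    ∫ p : ℝ, Complex.exp (Complex.I * p * ξ) *
      F ((x + p) / Real.sqrt 2) ((x - p) / Real.sqrt 2)

/-- The n-th Hermite function. -/
noncomputable def hermiteFun (n : ℕ) (x : ℝ) : ℝ :=
  Real.pi ^ (-(1/4 : ℝ)) * ((Nat.factorial n : ℝ)) ^ (-(1/2 : ℝ)) *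
    (2 : ℝ) ^ (-(n : ℝ)/2) * (-1 : ℝ)^n * Real.exp (x^2/2) *
    iteratedDeriv n (fun t => Real.exp (-t^2)) x

/-- Generalized Laguerre polynomial via the Rodrigues formula. -/
noncomputable def lagPoly (n α : ℕ) (x : ℝ) : ℝ :=
  Real.exp x / (Nat.factorial n * x ^ α) *
    iteratedDeriv n (fun t => Real.exp (-t) * t ^ (n + α)) x

/-- Two-dimensional Wigner transform. -/
noncomputable def Wig2 (f g : ℝ × ℝ → ℂ) (x ξ : ℝ × ℝ) : ℂ :=
  (2 * Real.pi : ℂ)⁻¹ * ∫ p : ℝ × ℝ,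
    Complex.exp (Complex.I * (p.1 * ξ.1 + p.2 * ξ.2)) *
    (starRingEnd ℂ) (f ((x.1 + p.1) / Real.sqrt 2, (x.2 + p.2) / Real.sqrt 2)) *
    g ((x.1 - p.1) / Real.sqrt 2, (x.2 - p.2) / Real.sqrt 2)

open Real Complex
open scoped FourierTransform

section WigAux

lemma affine_temperate (a b : ℝ) : Function.HasTemperateGrowth (fun p : ℝ => a + b * p) := by
  have hfun : (fun p : ℝ => a + b * p) = fun p => a + (b • ContinuousLinearMap.id ℝ ℝ) p := by
    ext p; simp [mul_comm]
  refine Function.HasTemperateGrowth.of_fderiv ?_ ?_ (k := 1) (C := |a| + |b|) ?_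
  · have hd : fderiv ℝ (fun p : ℝ => a + b * p) = fun _ => (b • ContinuousLinearMap.id ℝ ℝ) := by
      ext1 p
      rw [hfun, fderiv_const_add, ContinuousLinearMap.fderiv]
    rw [hd]
    exact Function.HasTemperateGrowth.const _
  · exact (differentiable_id.const_mul b).const_add a
  · intro x
    simp only [Real.norm_eq_abs, pow_one]
    have h1 : |a + b * x| ≤ |a| + |b| * |x| := by
      calc |a + b * x| ≤ |a| + |b * x| := abs_add_le _ _
      _ = |a| + |b| * |x| := by rw [abs_mul]
    nlinarith [abs_nonneg a, abs_nonneg b, abs_nonneg x]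

lemma affine_upper (a b : ℝ) (hb : b ≠ 0) :
    ∃ (k : ℕ) (C : ℝ), ∀ p : ℝ, ‖p‖ ≤ C * (1 + ‖a + b * p‖) ^ k := by
  refine ⟨1, |b|⁻¹ * (|a| + 1), fun p => ?_⟩
  have hb' : 0 < |b| := abs_pos.mpr hb
  simp only [Real.norm_eq_abs, pow_one]
  have h1 : |b| * |p| ≤ |a| + |a + b * p| := by
    have h0 : |b * p| ≤ |a + b * p| + |a| := by
      have h := abs_sub (a + b * p) a
      simpa using h
    rw [abs_mul] at h0; linarith
  have h2 : |a| + |a + b * p| ≤ (|a| + 1) * (1 + |a + b * p|) := by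
    nlinarith [abs_nonneg a, abs_nonneg (a + b * p)]
  calc |p| = |b|⁻¹ * (|b| * |p|) := by field_simp
  _ ≤ |b|⁻¹ * ((|a| + 1) * (1 + |a + b * p|)) := by
      exact mul_le_mul_of_nonneg_left (h1.trans h2) (inv_nonneg.mpr hb'.le)
  _ = |b|⁻¹ * (|a| + 1) * (1 + |a + b * p|) := by ring

lemma schwartz_temperate (f : SchwartzMap ℝ ℂ) : Function.HasTemperateGrowth ⇑f := by
  refine ⟨f.smooth', fun n => ⟨0, ?_⟩⟩
  obtain ⟨C, hC⟩ := f.decay' 0 n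
  exact ⟨C, fun x => by have := hC x; simp only [pow_zero, one_mul, mul_one] at this ⊢; exact this⟩

/-- Complex conjugation of a Schwartz function. -/
noncomputable def conjS (f : SchwartzMap ℝ ℂ) : SchwartzMap ℝ ℂ where
  toFun := fun x => (starRingEnd ℂ) (f x)
  smooth' := Complex.conjCLE.contDiff.comp f.smooth'
  decay' := by
    intro k n
    obtain ⟨C, hC⟩ := f.decay' k n
    refine ⟨C, fun x => ?_⟩
    have he : (fun x => (starRingEnd ℂ) (f x)) = (Complex.conjLIE : ℂ ≃ₗᵢ[ℝ] ℂ) ∘ ⇑f := rfl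
    rw [he, LinearIsometryEquiv.norm_iteratedFDeriv_comp_left]
    exact hC x

@[simp] lemma conjS_apply (f : SchwartzMap ℝ ℂ) (x : ℝ) :
    conjS f x = (starRingEnd ℂ) (f x) := rfl

/-- The Schwartz function `p ↦ conj (f ((x+p)/√2)) * g ((x-p)/√2)`. -/
noncomputable def hmap (f g : SchwartzMap ℝ ℂ) (x : ℝ) : SchwartzMap ℝ ℂ :=
  SchwartzMap.bilinLeftCLM (ContinuousLinearMap.mul ℝ ℂ)
    (schwartz_temperate (SchwartzMap.compCLM (𝕜 := ℝ)
      (affine_temperate (x / Real.sqrt 2) (-(Real.sqrt 2)⁻¹))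
      (affine_upper _ _ (by simp [Real.sqrt_eq_zero'])) g))
    (conjS (SchwartzMap.compCLM (𝕜 := ℝ)
      (affine_temperate (x / Real.sqrt 2) ((Real.sqrt 2)⁻¹))
      (affine_upper _ _ (by simp [Real.sqrt_eq_zero'])) f))

lemma hmap_apply (f g : SchwartzMap ℝ ℂ) (x p : ℝ) :
    hmap f g x p = (starRingEnd ℂ) (f ((x + p) / Real.sqrt 2)) * g ((x - p) / Real.sqrt 2) := by
  have e1 : x / Real.sqrt 2 + (Real.sqrt 2)⁻¹ * p = (x + p) / Real.sqrt 2 := by ring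
  have e2 : x / Real.sqrt 2 + (-(Real.sqrt 2)⁻¹) * p = (x - p) / Real.sqrt 2 := by ring
  show (starRingEnd ℂ) (f (x / Real.sqrt 2 + (Real.sqrt 2)⁻¹ * p))
      * g (x / Real.sqrt 2 + (-(Real.sqrt 2)⁻¹) * p) = _
  rw [e1, e2]

/-- Integrating the inverse-Fourier-type integral of a Schwartz function over all frequencies
recovers `2π` times its value at `0`. -/
lemma wig_key (h : SchwartzMap ℝ ℂ) :
    ∫ ξ : ℝ, (∫ p : ℝ, Complex.exp (Complex.I * p * ξ) * h p)
      = (2 * Real.pi : ℂ) * h 0 := by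
  have hpi : Real.pi ≠ 0 := Real.pi_ne_zero
  have hstep : ∀ ξ : ℝ, (∫ p : ℝ, Complex.exp (Complex.I * p * ξ) * h p)
      = 𝓕 (⇑h) (-(1 / (2 * Real.pi)) * ξ) := by
    intro ξ
    rw [Real.fourier_real_eq_integral_exp_smul]
    refine integral_congr_ae (Filter.Eventually.of_forall fun p => ?_)
    show Complex.exp (Complex.I * p * ξ) * h p
        = Complex.exp (((-2 * Real.pi * p * (-(1 / (2 * Real.pi)) * ξ) : ℝ) : ℂ) * Complex.I) • h p
    rw [smul_eq_mul]
    congr 1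
    have hr : (-2 * Real.pi * p * (-(1 / (2 * Real.pi)) * ξ) : ℝ) = p * ξ := by
      field_simp
    rw [hr]
    push_cast
    ring
  simp_rw [hstep]
  rw [MeasureTheory.Measure.integral_comp_mul_left (fun w => 𝓕 (⇑h) w) (-(1 / (2 * Real.pi)))]
  have habs : |(-(1 / (2 * Real.pi)))⁻¹| = 2 * Real.pi := by
    have he : (-(1 / (2 * Real.pi)))⁻¹ = -(2 * Real.pi) := by field_simp
    rw [he, abs_neg, abs_of_pos (by positivity)]
  rw [habs]
  have hFint : Integrable (𝓕 (⇑h)) := by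
    have := (SchwartzMap.fourierTransformCLM ℝ h).integrable (μ := volume)
    exact this
  have hinv : 𝓕⁻ (𝓕 (⇑h)) = ⇑h :=
    Continuous.fourierInv_fourier_eq h.continuous (h.integrable) hFint
  have hzero : (∫ w : ℝ, 𝓕 (⇑h) w) = h 0 := by
    have hz : 𝓕⁻ (𝓕 (⇑h)) 0 = ∫ w : ℝ, 𝓕 (⇑h) w := by
      rw [Real.fourierInv_eq]
      simp
    rw [hinv] at hz
    rw [← hz]
  rw [hzero, Complex.real_smul]
  push_cast
  ring

lemma wig_const : ((Real.sqrt (2 * Real.pi) : ℝ))⁻¹ * (2 * Real.pi) * Real.sqrt 2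
    = 2 * Real.sqrt Real.pi := by
  have h2 : Real.sqrt (2 * Real.pi) = Real.sqrt 2 * Real.sqrt Real.pi :=
    Real.sqrt_mul (by norm_num) _
  have h3 : Real.sqrt 2 * Real.sqrt 2 = 2 := Real.mul_self_sqrt (by norm_num)
  have h4 : Real.sqrt Real.pi * Real.sqrt Real.pi = Real.pi := Real.mul_self_sqrt Real.pi_pos.le
  have h5 : Real.sqrt 2 ≠ 0 := by positivity
  have h6 : Real.sqrt Real.pi ≠ 0 := by positivity
  rw [h2]
  field_simp
  linear_combination (-1 : ℝ) * h4

end WigAux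

/-- The double integral of the Wigner transform recovers the inner product. -/
theorem wig_double_integral (f g : SchwartzMap ℝ ℂ) :
    ∫ x : ℝ, ∫ ξ : ℝ, Wig (⇑f) (⇑g) x ξ
      = 2 * (Real.sqrt Real.pi : ℂ) * ∫ t : ℝ, (starRingEnd ℂ) (f t) * g t := by
  have hWig : ∀ x : ℝ, (∫ ξ : ℝ, Wig (⇑f) (⇑g) x ξ)
      = ((Real.sqrt (2 * Real.pi) : ℝ) : ℂ)⁻¹ * ((2 * Real.pi : ℂ) *
        ((starRingEnd ℂ) (f (x / Real.sqrt 2)) * g (x / Real.sqrt 2))) := by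
    intro x
    have h1 : ∀ ξ : ℝ, Wig (⇑f) (⇑g) x ξ
        = ((Real.sqrt (2 * Real.pi) : ℝ) : ℂ)⁻¹
          * ∫ p : ℝ, Complex.exp (Complex.I * p * ξ) * hmap f g x p := by
      intro ξ
      unfold Wig
      congr 1
      refine integral_congr_ae (Filter.Eventually.of_forall fun p => ?_)
      show Complex.exp (Complex.I * p * ξ) * (starRingEnd ℂ) (f ((x + p) / Real.sqrt 2))
          * g ((x - p) / Real.sqrt 2) = Complex.exp (Complex.I * p * ξ) * hmap f g x p
      rw [hmap_apply]
      ring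
    simp_rw [h1]
    rw [integral_const_mul _ _, wig_key (hmap f g x)]
    congr 2
    rw [hmap_apply]
    norm_num
  simp_rw [hWig]
  rw [integral_const_mul, integral_const_mul,
    MeasureTheory.Measure.integral_comp_div
      (fun t => (starRingEnd ℂ) (f t) * g t) (Real.sqrt 2)]
  rw [Complex.real_smul, abs_of_pos (by positivity : (0:ℝ) < Real.sqrt 2)]
  have hc : ((Real.sqrt (2 * Real.pi) : ℝ) : ℂ)⁻¹ * ((2 * Real.pi : ℂ) *
      ((Real.sqrt 2 : ℝ) : ℂ)) = 2 * (Real.sqrt Real.pi : ℂ) := by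
    have h' : (((Real.sqrt (2 * Real.pi))⁻¹ * (2 * Real.pi) * Real.sqrt 2 : ℝ) : ℂ)
        = ((2 * Real.sqrt Real.pi : ℝ) : ℂ) := Complex.ofReal_inj.mpr wig_const
    push_cast at h'
    linear_combination h'
  calc ((Real.sqrt (2 * Real.pi) : ℝ) : ℂ)⁻¹ * ((2 * Real.pi : ℂ) *
      (((Real.sqrt 2 : ℝ) : ℂ) * ∫ t : ℝ, (starRingEnd ℂ) (f t) * g t))
      = (((Real.sqrt (2 * Real.pi) : ℝ) : ℂ)⁻¹ * ((2 * Real.pi : ℂ) *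
        ((Real.sqrt 2 : ℝ) : ℂ))) * ∫ t : ℝ, (starRingEnd ℂ) (f t) * g t := by ring
  _ = 2 * (Real.sqrt Real.pi : ℂ) * ∫ t : ℝ, (starRingEnd ℂ) (f t) * g t := by rw [hc]
end

section
/- The extended Wigner transform intertwines a₁† with A₊†: for every Schwartz function F : ℝ² → ℂ, A₊†(W̃F) = W̃(a₁†F), where a₁† = (1/√2)(x − ∂/∂x) acts in the first variable and A₊† = (1/2)(x − ∂/∂x + i(y − ∂/∂y)). -/
open MeasureTheory

/-- First-variable creation operator a₁† = (x₁ − ∂₁)/√2. -/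
noncomputable def a1dag (F : ℝ → ℝ → ℂ) : ℝ → ℝ → ℂ :=
  fun x y => (Real.sqrt 2 : ℂ)⁻¹ * ((x : ℂ) * F x y - deriv (fun t => F t y) x)

/-- Second-variable creation operator a₂† = (x₂ − ∂₂)/√2. -/
noncomputable def a2dag (F : ℝ → ℝ → ℂ) : ℝ → ℝ → ℂ :=
  fun x y => (Real.sqrt 2 : ℂ)⁻¹ * ((y : ℂ) * F x y - deriv (fun t => F x t) y)

/-- First-variable annihilation operator a₁ = (x₁ + ∂₁)/√2. -/
noncomputable def a1op (F : ℝ → ℝ → ℂ) : ℝ → ℝ → ℂ :=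
  fun x y => (Real.sqrt 2 : ℂ)⁻¹ * ((x : ℂ) * F x y + deriv (fun t => F t y) x)

/-- Second-variable annihilation operator a₂ = (x₂ + ∂₂)/√2. -/
noncomputable def a2op (F : ℝ → ℝ → ℂ) : ℝ → ℝ → ℂ :=
  fun x y => (Real.sqrt 2 : ℂ)⁻¹ * ((y : ℂ) * F x y + deriv (fun t => F x t) y)

/-- A₊† = (1/2)(x − ∂/∂x + i(y − ∂/∂y)). -/
noncomputable def Apdag (G : ℝ → ℝ → ℂ) : ℝ → ℝ → ℂ :=
  fun x y => (1/2 : ℂ) * (((x : ℂ) * G x y - deriv (fun t => G t y) x)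
      + Complex.I * ((y : ℂ) * G x y - deriv (fun t => G x t) y))

/-- A₋† = (1/2)(x − ∂/∂x − i(y − ∂/∂y)). -/
noncomputable def Amdag (G : ℝ → ℝ → ℂ) : ℝ → ℝ → ℂ :=
  fun x y => (1/2 : ℂ) * (((x : ℂ) * G x y - deriv (fun t => G t y) x)
      - Complex.I * ((y : ℂ) * G x y - deriv (fun t => G x t) y))

/-- A₊ = (1/2)(x + ∂/∂x − i(y + ∂/∂y)). -/
noncomputable def Apop (G : ℝ → ℝ → ℂ) : ℝ → ℝ → ℂ :=
  fun x y => (1/2 : ℂ) * (((x : ℂ) * G x y + deriv (fun t => G t y) x)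
      - Complex.I * ((y : ℂ) * G x y + deriv (fun t => G x t) y))

/-- A₋ = (1/2)(x + ∂/∂x + i(y + ∂/∂y)). -/
noncomputable def Amop (G : ℝ → ℝ → ℂ) : ℝ → ℝ → ℂ :=
  fun x y => (1/2 : ℂ) * (((x : ℂ) * G x y + deriv (fun t => G t y) x)
      + Complex.I * ((y : ℂ) * G x y + deriv (fun t => G x t) y))


namespace SchwartzMap

/-- partial derivative along `m` (port helper). -/
noncomputable def pderivCLM (_𝕜 : Type) (m : ℝ × ℝ) : 𝓢(ℝ × ℝ, ℂ) →L[ℝ] 𝓢(ℝ × ℝ, ℂ) :=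
  LineDeriv.lineDerivOpCLM ℝ _ m

theorem pderivCLM_apply (𝕜 : Type) (m : ℝ × ℝ) (f : 𝓢(ℝ × ℝ, ℂ)) (x : ℝ × ℝ) :
    pderivCLM 𝕜 m f x = fderiv ℝ f x m :=
  by unfold pderivCLM; exact lineDerivOp_apply_eq_fderiv m f x

end SchwartzMap

namespace WigAux

open SchwartzMap Complex FourierTransform Real RealInnerProductSpace

lemma wig_decay (H : SchwartzMap (ℝ × ℝ) ℂ) (k : ℕ) :
    ∃ C : ℝ, 0 ≤ C ∧ ∀ x p : ℝ,
      ‖H ((x + p) / Real.sqrt 2, (x - p) / Real.sqrt 2)‖ ≤ C * ((1 + |p|) ^ k)⁻¹ := by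
  set S : ℝ := 2 ^ k * (Finset.Iic ((k : ℕ), (0 : ℕ))).sup
      (fun m => SchwartzMap.seminorm ℝ m.1 m.2) H with hS
  have hS0 : 0 ≤ S := by positivity
  refine ⟨2 ^ k * S, by positivity, fun x p => ?_⟩
  set z : ℝ × ℝ := ((x + p) / Real.sqrt 2, (x - p) / Real.sqrt 2) with hz
  have hs : Real.sqrt 2 * Real.sqrt 2 = 2 := Real.mul_self_sqrt (by norm_num)
  have hs0 : Real.sqrt 2 ≠ 0 := by positivity
  have hkey : |p| ≤ 2 * ‖z‖ := by
    have hdiff : z.1 - z.2 = Real.sqrt 2 * p := by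
      show (x + p) / Real.sqrt 2 - (x - p) / Real.sqrt 2 = _
      rw [div_sub_div_same, show x + p - (x - p) = Real.sqrt 2 * (Real.sqrt 2 * p) by
        rw [← mul_assoc, hs]; ring, mul_div_cancel_left₀ _ hs0]
    have h1 : |p| ≤ |Real.sqrt 2 * p| := by
      rw [abs_mul, _root_.abs_of_nonneg (Real.sqrt_nonneg 2)]
      nlinarith [abs_nonneg p, Real.one_le_sqrt.mpr (by norm_num : (1:ℝ) ≤ 2)]
    have h2 : |Real.sqrt 2 * p| ≤ |z.1| + |z.2| := by
      rw [← hdiff]; exact abs_sub _ _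
    have h3 : |z.1| ≤ ‖z‖ := le_max_left _ _
    have h4 : |z.2| ≤ ‖z‖ := le_max_right _ _
    linarith
  have hpow : (1 + |p|) ^ k ≤ 2 ^ k * (1 + ‖z‖) ^ k := by
    rw [← mul_pow]
    apply pow_le_pow_left₀ (by positivity)
    have : (0:ℝ) ≤ ‖z‖ := norm_nonneg z
    linarith
  have hsem := one_add_le_sup_seminorm_apply (𝕜 := ℝ) (m := (k, 0)) le_rfl le_rfl H z
  rw [norm_iteratedFDeriv_zero] at hsem
  have hpos : (0:ℝ) < (1 + |p|) ^ k := by positivity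
  rw [← div_eq_mul_inv, le_div_iff₀ hpos]
  have h2k : (0:ℝ) ≤ 2 ^ k := by positivity
  calc ‖H z‖ * (1 + |p|) ^ k ≤ ‖H z‖ * (2 ^ k * (1 + ‖z‖) ^ k) := by
        exact mul_le_mul_of_nonneg_left hpow (norm_nonneg _)
    _ = 2 ^ k * ((1 + ‖z‖) ^ k * ‖H z‖) := by ring
    _ ≤ 2 ^ k * S := by
        apply mul_le_mul_of_nonneg_left _ h2k
        simpa [hS] using hsem

lemma norm_wigexp (p ξ : ℝ) : ‖Complex.exp (Complex.I * p * ξ)‖ = 1 := by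
  rw [Complex.norm_exp]
  simp

lemma wig_cont (H : SchwartzMap (ℝ × ℝ) ℂ) (x : ℝ) :
    Continuous (fun p : ℝ => H ((x + p) / Real.sqrt 2, (x - p) / Real.sqrt 2)) := by
  apply H.continuous.comp
  fun_prop

/-- integrability of exp * H along the line -/
lemma wig_int1 (H : SchwartzMap (ℝ × ℝ) ℂ) (x ξ : ℝ) :
    Integrable (fun p : ℝ => Complex.exp (Complex.I * p * ξ) *
      H ((x + p) / Real.sqrt 2, (x - p) / Real.sqrt 2)) := by
  obtain ⟨C, hC0, hC⟩ := wig_decay H 2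
  apply Integrable.mono ((integrable_inv_one_add_sq).const_mul C)
  · exact (Continuous.mul (by fun_prop) (wig_cont H x)).aestronglyMeasurable
  · filter_upwards with p
    rw [norm_mul, norm_wigexp, one_mul]
    have h1 : (1:ℝ) + p ^ 2 ≤ (1 + |p|) ^ 2 := by nlinarith [abs_nonneg p, _root_.sq_abs p]
    have h2 : C * ((1 + |p|) ^ 2)⁻¹ ≤ C * (1 + p ^ 2)⁻¹ := by
      apply mul_le_mul_of_nonneg_left _ hC0
      apply inv_anti₀ (by positivity) h1
    calc ‖H _‖ ≤ C * ((1 + |p|) ^ 2)⁻¹ := hC x p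
      _ ≤ C * (1 + p ^ 2)⁻¹ := h2
      _ ≤ ‖C * (1 + p ^ 2)⁻¹‖ := le_abs_self _

/-- integrability of p * exp * H along the line -/
lemma wig_int2 (H : SchwartzMap (ℝ × ℝ) ℂ) (x ξ : ℝ) :
    Integrable (fun p : ℝ => (p : ℂ) * (Complex.exp (Complex.I * p * ξ) *
      H ((x + p) / Real.sqrt 2, (x - p) / Real.sqrt 2))) := by
  obtain ⟨C, hC0, hC⟩ := wig_decay H 3
  apply Integrable.mono ((integrable_inv_one_add_sq).const_mul C)
  · exact (Continuous.mul (by fun_prop) (Continuous.mul (by fun_prop) (wig_cont H x))).aestronglyMeasurable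
  · filter_upwards with p
    rw [norm_mul, norm_mul, norm_wigexp, one_mul, Complex.norm_real, Real.norm_eq_abs]
    have hb : |p| * ((1 + |p|) ^ 3)⁻¹ ≤ (1 + p ^ 2)⁻¹ := by
      rw [inv_eq_one_div, inv_eq_one_div, mul_one_div, div_le_div_iff₀ (by positivity) (by positivity)]
      nlinarith [abs_nonneg p, _root_.sq_abs p]
    calc |p| * ‖H _‖ ≤ |p| * (C * ((1 + |p|) ^ 3)⁻¹) :=
          mul_le_mul_of_nonneg_left (hC x p) (abs_nonneg p)
      _ = C * (|p| * ((1 + |p|) ^ 3)⁻¹) := by ring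
      _ ≤ C * (1 + p ^ 2)⁻¹ := mul_le_mul_of_nonneg_left hb hC0
      _ ≤ ‖C * (1 + p ^ 2)⁻¹‖ := le_abs_self _

/-- derivative in p of p ↦ F((x+p)/√2,(x-p)/√2) -/
lemma wig_D1 (F : SchwartzMap (ℝ × ℝ) ℂ) (x p : ℝ) :
    HasDerivAt (fun q : ℝ => F ((x + q) / Real.sqrt 2, (x - q) / Real.sqrt 2))
      ((Real.sqrt 2)⁻¹ • (fderiv ℝ F ((x + p) / Real.sqrt 2, (x - p) / Real.sqrt 2) (1, 0)
        - fderiv ℝ F ((x + p) / Real.sqrt 2, (x - p) / Real.sqrt 2) (0, 1))) p := by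
  have h1 : HasDerivAt (fun q : ℝ => (x + q) / Real.sqrt 2) (1 / Real.sqrt 2) p :=
    ((hasDerivAt_id p).const_add x).div_const _
  have h2 : HasDerivAt (fun q : ℝ => (x - q) / Real.sqrt 2) ((-1) / Real.sqrt 2) p :=
    ((hasDerivAt_id p).const_sub x).div_const _
  have h3 := h1.prodMk h2
  have h4 := (F.differentiableAt.hasFDerivAt).comp_hasDerivAt p h3
  refine h4.congr_deriv ?_
  have he : ((1 / Real.sqrt 2 : ℝ), (-1 / Real.sqrt 2 : ℝ))
      = (Real.sqrt 2)⁻¹ • (((1:ℝ), (0:ℝ)) - ((0:ℝ), (1:ℝ))) := by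
    simp [Prod.ext_iff, Prod.smul_def]
    ring
  rw [he, _root_.map_smul, map_sub]

/-- derivative in x of x ↦ F((x+p)/√2,(x-p)/√2) -/
lemma wig_D2 (F : SchwartzMap (ℝ × ℝ) ℂ) (x p : ℝ) :
    HasDerivAt (fun t : ℝ => F ((t + p) / Real.sqrt 2, (t - p) / Real.sqrt 2))
      ((Real.sqrt 2)⁻¹ • (fderiv ℝ F ((x + p) / Real.sqrt 2, (x - p) / Real.sqrt 2) (1, 0)
        + fderiv ℝ F ((x + p) / Real.sqrt 2, (x - p) / Real.sqrt 2) (0, 1))) x := by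
  have h1 : HasDerivAt (fun t : ℝ => (t + p) / Real.sqrt 2) (1 / Real.sqrt 2) x :=
    ((hasDerivAt_id x).add_const p).div_const _
  have h2 : HasDerivAt (fun t : ℝ => (t - p) / Real.sqrt 2) (1 / Real.sqrt 2) x :=
    ((hasDerivAt_id x).sub_const p).div_const _
  have h3 := h1.prodMk h2
  have h4 := (F.differentiableAt.hasFDerivAt).comp_hasDerivAt x h3
  refine h4.congr_deriv ?_
  have he : ((1 / Real.sqrt 2 : ℝ), (1 / Real.sqrt 2 : ℝ))
      = (Real.sqrt 2)⁻¹ • (((1:ℝ), (0:ℝ)) + ((0:ℝ), (1:ℝ))) := by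
    simp [Prod.ext_iff, Prod.smul_def]
  rw [he, _root_.map_smul, map_add]

/-- derivative of t ↦ F(t, v) -/
lemma wig_D3 (F : SchwartzMap (ℝ × ℝ) ℂ) (u v : ℝ) :
    HasDerivAt (fun t : ℝ => F (t, v)) (fderiv ℝ F (u, v) (1, 0)) u := by
  have h3 := (hasDerivAt_id u).prodMk (hasDerivAt_const u v)
  have h4 := (F.differentiableAt.hasFDerivAt).comp_hasDerivAt u h3
  exact h4

/-- derivative of the exponential factor -/
lemma wig_Dexp (p ξ : ℝ) :
    HasDerivAt (fun t : ℝ => Complex.exp (Complex.I * p * t))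
      (Complex.I * p * Complex.exp (Complex.I * p * ξ)) ξ := by
  have h0 : HasDerivAt (fun t : ℝ => (t : ℂ)) 1 ξ := Complex.ofRealCLM.hasDerivAt
  have h1 := (h0.const_mul (Complex.I * p)).cexp
  simpa [mul_comm] using h1

/-- Step Y : ξ-derivative under the integral -/
lemma wig_stepY (F : SchwartzMap (ℝ × ℝ) ℂ) (x y : ℝ) :
    HasDerivAt (fun ξ : ℝ => ∫ p : ℝ, Complex.exp (Complex.I * p * ξ) *
        F ((x + p) / Real.sqrt 2, (x - p) / Real.sqrt 2))
      (∫ p : ℝ, Complex.I * p * (Complex.exp (Complex.I * p * y) *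
        F ((x + p) / Real.sqrt 2, (x - p) / Real.sqrt 2))) y := by
  obtain ⟨C, hC0, hC⟩ := wig_decay F 3
  have hb : ∀ p : ℝ, |p| * ‖F ((x + p) / Real.sqrt 2, (x - p) / Real.sqrt 2)‖
      ≤ C * (1 + p ^ 2)⁻¹ := by
    intro p
    have hb2 : |p| * ((1 + |p|) ^ 3)⁻¹ ≤ (1 + p ^ 2)⁻¹ := by
      rw [inv_eq_one_div, inv_eq_one_div, mul_one_div,
        div_le_div_iff₀ (by positivity) (by positivity)]
      nlinarith [abs_nonneg p, _root_.sq_abs p]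
    calc |p| * ‖F _‖ ≤ |p| * (C * ((1 + |p|) ^ 3)⁻¹) :=
          mul_le_mul_of_nonneg_left (hC x p) (abs_nonneg p)
      _ = C * (|p| * ((1 + |p|) ^ 3)⁻¹) := by ring
      _ ≤ C * (1 + p ^ 2)⁻¹ := mul_le_mul_of_nonneg_left hb2 hC0
  have := hasDerivAt_integral_of_dominated_loc_of_deriv_le (μ := volume)
    (F := fun (ξ : ℝ) (p : ℝ) => Complex.exp (Complex.I * p * ξ) *
        F ((x + p) / Real.sqrt 2, (x - p) / Real.sqrt 2))
    (F' := fun (ξ : ℝ) (p : ℝ) => Complex.I * p * (Complex.exp (Complex.I * p * ξ) *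
        F ((x + p) / Real.sqrt 2, (x - p) / Real.sqrt 2)))
    (x₀ := y) (bound := fun p => C * (1 + p ^ 2)⁻¹) (s := Metric.ball y 1) (Metric.ball_mem_nhds y one_pos)
    (Filter.Eventually.of_forall fun ξ =>
      ((Continuous.mul (by fun_prop) (wig_cont F x)).aestronglyMeasurable))
    (wig_int1 F x y)
    ((Continuous.mul (by fun_prop) (Continuous.mul (by fun_prop) (wig_cont F x))).aestronglyMeasurable)
    (Filter.Eventually.of_forall fun p => fun ξ _ => by
      rw [norm_mul, norm_mul, norm_mul, norm_wigexp]
      simpa [Complex.norm_real, Real.norm_eq_abs] using hb p)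
    ((integrable_inv_one_add_sq).const_mul C)
    (Filter.Eventually.of_forall fun p => fun ξ _ => by
      have := (wig_Dexp p ξ).mul_const (F ((x + p) / Real.sqrt 2, (x - p) / Real.sqrt 2))
      refine this.congr_deriv ?_
      ring)
  exact this.2

/-- Step X : x-derivative under the integral -/
lemma wig_stepX (F : SchwartzMap (ℝ × ℝ) ℂ) (x y : ℝ) :
    HasDerivAt (fun t : ℝ => ∫ p : ℝ, Complex.exp (Complex.I * p * y) *
        F ((t + p) / Real.sqrt 2, (t - p) / Real.sqrt 2))
      (∫ p : ℝ, Complex.exp (Complex.I * p * y) *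
        ((Real.sqrt 2)⁻¹ •
          (pderivCLM ℝ ((1:ℝ), (0:ℝ)) F ((x + p) / Real.sqrt 2, (x - p) / Real.sqrt 2)
          + pderivCLM ℝ ((0:ℝ), (1:ℝ)) F ((x + p) / Real.sqrt 2, (x - p) / Real.sqrt 2)))) x := by
  set H₁ := pderivCLM ℝ ((1:ℝ), (0:ℝ)) F with hH₁
  set H₂ := pderivCLM ℝ ((0:ℝ), (1:ℝ)) F with hH₂
  obtain ⟨C₁, hC₁0, hC₁⟩ := wig_decay H₁ 2
  obtain ⟨C₂, hC₂0, hC₂⟩ := wig_decay H₂ 2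
  have hinv : ((1:ℝ) + |·| ) = fun p : ℝ => 1 + |p| := rfl
  have key := hasDerivAt_integral_of_dominated_loc_of_deriv_le (μ := volume)
    (F := fun (t : ℝ) (p : ℝ) => Complex.exp (Complex.I * p * y) *
        F ((t + p) / Real.sqrt 2, (t - p) / Real.sqrt 2))
    (F' := fun (t : ℝ) (p : ℝ) => Complex.exp (Complex.I * p * y) *
        ((Real.sqrt 2)⁻¹ • (H₁ ((t + p) / Real.sqrt 2, (t - p) / Real.sqrt 2)
          + H₂ ((t + p) / Real.sqrt 2, (t - p) / Real.sqrt 2))))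
    (x₀ := x) (bound := fun p => (C₁ + C₂) * (1 + p ^ 2)⁻¹) (s := Metric.ball x 1) (Metric.ball_mem_nhds x one_pos)
    (Filter.Eventually.of_forall fun t =>
      ((Continuous.mul (by fun_prop) (wig_cont F t)).aestronglyMeasurable))
    (wig_int1 F x y)
    ((Continuous.mul (by fun_prop : Continuous fun p : ℝ => Complex.exp (Complex.I * p * y))
      (Continuous.smul (continuous_const (y := (Real.sqrt 2)⁻¹)) ((wig_cont H₁ x).add (wig_cont H₂ x)))).aestronglyMeasurable)
    (Filter.Eventually.of_forall fun p => fun t _ => by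
      rw [norm_mul, norm_wigexp, one_mul, norm_smul]
      have h1 : ‖H₁ ((t + p) / Real.sqrt 2, (t - p) / Real.sqrt 2)
          + H₂ ((t + p) / Real.sqrt 2, (t - p) / Real.sqrt 2)‖
          ≤ (C₁ + C₂) * ((1 + |p|) ^ 2)⁻¹ := by
        calc ‖_ + _‖ ≤ ‖H₁ _‖ + ‖H₂ _‖ := norm_add_le _ _
          _ ≤ C₁ * ((1 + |p|) ^ 2)⁻¹ + C₂ * ((1 + |p|) ^ 2)⁻¹ := add_le_add (hC₁ t p) (hC₂ t p)
          _ = (C₁ + C₂) * ((1 + |p|) ^ 2)⁻¹ := by ring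
      have h2 : ((1 + |p|) ^ 2)⁻¹ ≤ (1 + p ^ 2)⁻¹ := by
        apply inv_anti₀ (by positivity)
        nlinarith [abs_nonneg p, _root_.sq_abs p]
      have h3 : ‖(Real.sqrt 2)⁻¹‖ ≤ 1 := by
        rw [Real.norm_eq_abs, _root_.abs_of_nonneg (by positivity)]
        rw [inv_le_one_iff₀]
        right
        nlinarith [Real.sq_sqrt (by norm_num : (0:ℝ) ≤ 2), Real.sqrt_nonneg 2]
      calc ‖(Real.sqrt 2)⁻¹‖ * ‖_‖ ≤ 1 * ((C₁ + C₂) * ((1 + |p|) ^ 2)⁻¹) := by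
            apply mul_le_mul h3 h1 (norm_nonneg _) (by norm_num)
        _ = (C₁ + C₂) * ((1 + |p|) ^ 2)⁻¹ := by ring
        _ ≤ (C₁ + C₂) * (1 + p ^ 2)⁻¹ := by
            apply mul_le_mul_of_nonneg_left h2 (by positivity))
    ((integrable_inv_one_add_sq).const_mul _)
    (Filter.Eventually.of_forall fun p => fun t _ => by
      have := (wig_D2 F t p).const_mul (Complex.exp (Complex.I * p * y))
      simpa [hH₁, hH₂, pderivCLM_apply] using this)
  exact key.2

/-- Step Z : integration by parts -/
lemma wig_stepZ (F : SchwartzMap (ℝ × ℝ) ℂ) (x y : ℝ) :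
    ∫ p : ℝ, Complex.exp (Complex.I * p * y) *
      ((Real.sqrt 2)⁻¹ •
        (pderivCLM ℝ ((1:ℝ), (0:ℝ)) F ((x + p) / Real.sqrt 2, (x - p) / Real.sqrt 2)
        - pderivCLM ℝ ((0:ℝ), (1:ℝ)) F ((x + p) / Real.sqrt 2, (x - p) / Real.sqrt 2)))
      = -(Complex.I * y) * ∫ p : ℝ, Complex.exp (Complex.I * p * y) *
          F ((x + p) / Real.sqrt 2, (x - p) / Real.sqrt 2) := by
  set f : ℝ → ℂ := fun p => F ((x + p) / Real.sqrt 2, (x - p) / Real.sqrt 2) with hf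
  set g : ℝ → ℂ := fun p => (Real.sqrt 2)⁻¹ •
        (pderivCLM ℝ ((1:ℝ), (0:ℝ)) F ((x + p) / Real.sqrt 2, (x - p) / Real.sqrt 2)
        - pderivCLM ℝ ((0:ℝ), (1:ℝ)) F ((x + p) / Real.sqrt 2, (x - p) / Real.sqrt 2)) with hg
  have hderiv : ∀ p : ℝ, HasDerivAt f (g p) p := fun p => by
    simpa [hg, pderivCLM_apply] using wig_D1 F x p
  have hfint : Integrable f := by
    have := wig_int1 F x 0
    simpa using this
  have hdiff : Differentiable ℝ f := fun p => (hderiv p).differentiableAt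
  have hgf : deriv f = g := funext fun p => (hderiv p).deriv
  have hgint : Integrable (deriv f) := by
    rw [hgf, hg]
    apply Integrable.fun_smul
    apply Integrable.sub
    · have := wig_int1 (pderivCLM ℝ ((1:ℝ), (0:ℝ)) F) x 0
      simpa using this
    · have := wig_int1 (pderivCLM ℝ ((0:ℝ), (1:ℝ)) F) x 0
      simpa using this
  have key := congrFun (Real.fourier_deriv hfint hdiff hgint) (-y / (2 * Real.pi))
  rw [hgf] at key
  rw [Real.fourier_eq', Real.fourier_eq'] at key
  simp only [smul_eq_mul] at key
  set w : ℝ := -y / (2 * Real.pi) with hwdef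
  have hargR : ∀ v : ℝ, (-2 * Real.pi * (inner ℝ v w) : ℝ) = v * y := by
    intro v
    have hinner : (inner ℝ v w : ℝ) = v * w := by
      rw [RCLike.inner_apply]; simp; ring
    rw [hinner, hwdef]
    field_simp
  have harg : ∀ v : ℝ, ((-2 * Real.pi * (inner ℝ v w) : ℝ) : ℂ) * Complex.I
      = Complex.I * v * y := by
    intro v
    rw [hargR v]
    push_cast
    ring
  have e1 : ∀ h : ℝ → ℂ, (∫ v : ℝ, Complex.exp (((-2 * Real.pi * (inner ℝ v w) : ℝ) : ℂ) * Complex.I) * h v)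
      = ∫ v : ℝ, Complex.exp (Complex.I * v * y) * h v := by
    intro h
    congr 1
    funext v
    rw [harg v]
  rw [e1, e1] at key
  have hw : 2 * (Real.pi : ℂ) * Complex.I * ((w : ℝ) : ℂ) = -(Complex.I * y) := by
    rw [hwdef]
    have hpi : (Real.pi : ℂ) ≠ 0 := Complex.ofReal_ne_zero.mpr Real.pi_ne_zero
    push_cast
    field_simp
  rw [hw] at key
  exact key

end WigAux

open WigAux in
/-- The extended Wigner transform intertwines a₁† with A₊†. -/
theorem extW_intertwine_a1dag (F : SchwartzMap (ℝ × ℝ) ℂ) (x y : ℝ) :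
    Apdag (ExtW (fun a b => F (a, b))) x y
      = ExtW (a1dag (fun a b => F (a, b))) x y := by
  have hs0 : ((Real.sqrt 2 : ℝ) : ℂ) ≠ 0 := by
    simp only [ne_eq, Complex.ofReal_eq_zero]
    positivity
  set c : ℂ := (Real.sqrt (2 * Real.pi) : ℂ)⁻¹ with hc
  set r : ℂ := ((Real.sqrt 2 : ℝ) : ℂ)⁻¹ with hr
  set H₁ := SchwartzMap.pderivCLM ℝ ((1:ℝ), (0:ℝ)) F with hH₁
  set H₂ := SchwartzMap.pderivCLM ℝ ((0:ℝ), (1:ℝ)) F with hH₂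
  set I0 : ℂ := ∫ p : ℝ, Complex.exp (Complex.I * p * y) *
      F ((x + p) / Real.sqrt 2, (x - p) / Real.sqrt 2) with hI0
  set I1 : ℂ := ∫ p : ℝ, Complex.exp (Complex.I * p * y) *
      H₁ ((x + p) / Real.sqrt 2, (x - p) / Real.sqrt 2) with hI1
  set I2 : ℂ := ∫ p : ℝ, Complex.exp (Complex.I * p * y) *
      H₂ ((x + p) / Real.sqrt 2, (x - p) / Real.sqrt 2) with hI2
  set Ip : ℂ := ∫ p : ℝ, (p : ℂ) * (Complex.exp (Complex.I * p * y) *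
      F ((x + p) / Real.sqrt 2, (x - p) / Real.sqrt 2)) with hIp
  have hrr : r * r = (2 : ℂ)⁻¹ := by
    rw [hr, ← mul_inv]
    norm_cast
    rw [Real.mul_self_sqrt (by norm_num)]
    norm_num
  -- smul = r * for complex values
  have hsmul : ∀ w : ℂ, (Real.sqrt 2)⁻¹ • w = r * w := fun w => by
    rw [hr, Complex.real_smul, Complex.ofReal_inv]
  -- value of ExtW
  have hG : ExtW (fun a b => F (a, b)) x y = c * I0 := by
    simp only [ExtW, hI0, hc]
  -- x-derivative
  have hX : deriv (fun t => ExtW (fun a b => F (a, b)) t y) x = c * (r * (I1 + I2)) := by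
    have hfun : (fun t => ExtW (fun a b => F (a, b)) t y)
        = fun t => c * ∫ p : ℝ, Complex.exp (Complex.I * p * y) *
            F ((t + p) / Real.sqrt 2, (t - p) / Real.sqrt 2) := by
      funext t; simp only [ExtW, hc]
    rw [hfun, ((wig_stepX F x y).const_mul c).deriv]
    congr 1
    rw [show (fun p : ℝ => Complex.exp (Complex.I * p * y) *
        ((Real.sqrt 2)⁻¹ • (H₁ ((x + p) / Real.sqrt 2, (x - p) / Real.sqrt 2)
          + H₂ ((x + p) / Real.sqrt 2, (x - p) / Real.sqrt 2))))
      = fun p : ℝ => r * (Complex.exp (Complex.I * p * y) * H₁ ((x + p) / Real.sqrt 2, (x - p) / Real.sqrt 2)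
          + Complex.exp (Complex.I * p * y) * H₂ ((x + p) / Real.sqrt 2, (x - p) / Real.sqrt 2))
      from funext fun p => by rw [hsmul]; ring]
    rw [MeasureTheory.integral_const_mul,
      MeasureTheory.integral_add (wig_int1 H₁ x y) (wig_int1 H₂ x y), hI1, hI2]
  -- ξ-derivative
  have hY : deriv (fun t => ExtW (fun a b => F (a, b)) x t) y = c * (Complex.I * Ip) := by
    have hfun : (fun t => ExtW (fun a b => F (a, b)) x t)
        = fun t : ℝ => c * ∫ p : ℝ, Complex.exp (Complex.I * p * (t:ℂ)) *
            F ((x + p) / Real.sqrt 2, (x - p) / Real.sqrt 2) := by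
      funext t; simp only [ExtW, hc]
    rw [hfun, ((wig_stepY F x y).const_mul c).deriv]
    congr 1
    rw [show (fun p : ℝ => Complex.I * p * (Complex.exp (Complex.I * p * y) *
        F ((x + p) / Real.sqrt 2, (x - p) / Real.sqrt 2)))
      = fun p : ℝ => Complex.I * ((p : ℂ) * (Complex.exp (Complex.I * p * y) *
        F ((x + p) / Real.sqrt 2, (x - p) / Real.sqrt 2)))
      from funext fun p => by ring]
    rw [MeasureTheory.integral_const_mul, hIp]
  -- integration by parts
  have hZ : r * I1 - r * I2 = -(Complex.I * y) * I0 := by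
    have h := wig_stepZ F x y
    rw [show (fun p : ℝ => Complex.exp (Complex.I * p * y) *
        ((Real.sqrt 2)⁻¹ • (H₁ ((x + p) / Real.sqrt 2, (x - p) / Real.sqrt 2)
          - H₂ ((x + p) / Real.sqrt 2, (x - p) / Real.sqrt 2))))
      = fun p : ℝ => r * (Complex.exp (Complex.I * p * y) * H₁ ((x + p) / Real.sqrt 2, (x - p) / Real.sqrt 2))
          - r * (Complex.exp (Complex.I * p * y) * H₂ ((x + p) / Real.sqrt 2, (x - p) / Real.sqrt 2))
      from funext fun p => by rw [hsmul]; ring] at h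
    rw [MeasureTheory.integral_sub ((wig_int1 H₁ x y).const_mul r) ((wig_int1 H₂ x y).const_mul r),
      MeasureTheory.integral_const_mul, MeasureTheory.integral_const_mul] at h
    exact h
  -- right-hand side
  have hRHS : ExtW (a1dag (fun a b => F (a, b))) x y
      = c * (r * (r * ((x : ℂ) * I0 + Ip) - I1)) := by
    simp only [ExtW, hc]
    congr 1
    have hpt : ∀ p : ℝ, Complex.exp (Complex.I * p * y) *
        a1dag (fun a b => F (a, b)) ((x + p) / Real.sqrt 2) ((x - p) / Real.sqrt 2)
        = r * (r * ((x : ℂ) * (Complex.exp (Complex.I * p * y) *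
              F ((x + p) / Real.sqrt 2, (x - p) / Real.sqrt 2))
            + (p : ℂ) * (Complex.exp (Complex.I * p * y) *
              F ((x + p) / Real.sqrt 2, (x - p) / Real.sqrt 2)))
          - Complex.exp (Complex.I * p * y) *
              H₁ ((x + p) / Real.sqrt 2, (x - p) / Real.sqrt 2)) := by
      intro p
      have hd : deriv (fun t => F (t, (x - p) / Real.sqrt 2)) ((x + p) / Real.sqrt 2)
          = H₁ ((x + p) / Real.sqrt 2, (x - p) / Real.sqrt 2) := by
        rw [(wig_D3 F ((x + p) / Real.sqrt 2) ((x - p) / Real.sqrt 2)).deriv, hH₁,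
          SchwartzMap.pderivCLM_apply]
      simp only [a1dag]
      rw [hd, hr]
      push_cast
      field_simp
    rw [show (fun p : ℝ => Complex.exp (Complex.I * p * y) *
        a1dag (fun a b => F (a, b)) ((x + p) / Real.sqrt 2) ((x - p) / Real.sqrt 2)) = _
      from funext hpt]
    have hint_x : Integrable (fun p : ℝ => (x : ℂ) * (Complex.exp (Complex.I * p * y) *
        F ((x + p) / Real.sqrt 2, (x - p) / Real.sqrt 2))) :=
      (wig_int1 F x y).const_mul _
    have hint_sum : Integrable (fun p : ℝ => (x : ℂ) * (Complex.exp (Complex.I * p * y) *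
          F ((x + p) / Real.sqrt 2, (x - p) / Real.sqrt 2))
        + (p : ℂ) * (Complex.exp (Complex.I * p * y) *
          F ((x + p) / Real.sqrt 2, (x - p) / Real.sqrt 2))) :=
      hint_x.add (wig_int2 F x y)
    rw [MeasureTheory.integral_const_mul,
      MeasureTheory.integral_sub (hint_sum.const_mul r) (wig_int1 H₁ x y),
      MeasureTheory.integral_const_mul,
      MeasureTheory.integral_add hint_x (wig_int2 F x y),
      MeasureTheory.integral_const_mul, hI0, hI1, hIp]
  -- assemble
  simp only [Apdag]
  rw [hG, hX, hY, hRHS]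
  linear_combination (c / 2) * hZ - (c / 2) * Ip * Complex.I_mul_I
    - c * ((x : ℂ) * I0 + Ip) * hrr
end

section
/- The extended Wigner transform intertwines a₂† with A₋†: for every Schwartz function F : ℝ² → ℂ, A₋†(W̃F) = W̃(a₂†F), where a₂† = (1/√2)(y − ∂/∂y) acts in the second variable and A₋† = (1/2)(x − ∂/∂x − i(y − ∂/∂y)). -/
open MeasureTheory

section WignerAux
open MeasureTheory Complex Filter


noncomputable def mA (x p : ℝ) : ℝ × ℝ := ((x + p)/Real.sqrt 2, (x - p)/Real.sqrt 2)

lemma sqrt2_mul_self : Real.sqrt 2 * Real.sqrt 2 = 2 := Real.mul_self_sqrt (by norm_num)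

lemma norm_cexp_Ipy (p y : ℝ) : ‖Complex.exp (Complex.I * p * y)‖ = 1 := by
  rw [Complex.norm_exp]
  simp [Complex.mul_re]

lemma one_add_abs_le (x p : ℝ) : 1 + |p| ≤ 2 * (1 + ‖mA x p‖) := by
  have h1 : ‖mA x p‖ ≥ |p| / 2 := by
    have hab : |(x + p)/Real.sqrt 2 - (x - p)/Real.sqrt 2| ≤ ‖mA x p‖ + ‖mA x p‖ := by
      have h1 : |(x + p)/Real.sqrt 2| ≤ ‖mA x p‖ := by
        rw [mA, Prod.norm_def]; exact le_max_of_le_left (le_of_eq (Real.norm_eq_abs _).symm)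
      have h2 : |(x - p)/Real.sqrt 2| ≤ ‖mA x p‖ := by
        rw [mA, Prod.norm_def]; exact le_max_of_le_right (le_of_eq (Real.norm_eq_abs _).symm)
      calc |(x + p)/Real.sqrt 2 - (x - p)/Real.sqrt 2|
          ≤ |(x + p)/Real.sqrt 2| + |(x - p)/Real.sqrt 2| := abs_sub _ _
        _ ≤ _ := add_le_add h1 h2
    have heq : (x + p)/Real.sqrt 2 - (x - p)/Real.sqrt 2 = 2 * p / Real.sqrt 2 := by ring
    have hs : (0:ℝ) < Real.sqrt 2 := Real.sqrt_pos.mpr (by norm_num)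
    have h2 : |2 * p / Real.sqrt 2| = 2 * |p| / Real.sqrt 2 := by
      rw [abs_div, abs_of_pos hs, abs_mul]; norm_num
    have hs2 : Real.sqrt 2 ≤ 2 := by nlinarith [sqrt2_mul_self, hs]
    have : 2 * |p| / Real.sqrt 2 ≥ |p| := by
      rw [ge_iff_le, le_div_iff₀ hs]; nlinarith [abs_nonneg p]
    rw [heq, h2] at hab; linarith
  linarith [norm_nonneg (mA x p), abs_nonneg p]

lemma decay3 (F : SchwartzMap (ℝ × ℝ) ℂ) (n : ℕ) :
    ∃ C, 0 ≤ C ∧ ∀ z, (1 + ‖z‖)^3 * ‖iteratedFDeriv ℝ n (⇑F) z‖ ≤ C := by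
  obtain ⟨C0, hC0, h0⟩ := F.decay 0 n
  obtain ⟨C1, hC1, h1⟩ := F.decay 1 n
  obtain ⟨C2, hC2, h2⟩ := F.decay 2 n
  obtain ⟨C3, hC3, h3⟩ := F.decay 3 n
  refine ⟨C0 + 3*C1 + 3*C2 + C3, by linarith, fun z => ?_⟩
  have e0 := h0 z; have e1 := h1 z; have e2 := h2 z; have e3 := h3 z
  simp only [pow_zero, pow_one, one_mul] at e0 e1
  nlinarith [norm_nonneg z, norm_nonneg (iteratedFDeriv ℝ n (⇑F) z)]

/-- master bound: value, |p|·value, fderiv norm all bounded by C/(1+p²) along mA. -/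
lemma master (F : SchwartzMap (ℝ × ℝ) ℂ) :
    ∃ C : ℝ, 0 ≤ C ∧ ∀ x p : ℝ,
      ‖F (mA x p)‖ ≤ C / (1 + p^2) ∧
      |p| * ‖F (mA x p)‖ ≤ C / (1 + p^2) ∧
      ‖fderiv ℝ (⇑F) (mA x p)‖ ≤ C / (1 + p^2) := by
  obtain ⟨C0, hC0, h0⟩ := decay3 F 0
  obtain ⟨C1, hC1, h1⟩ := decay3 F 1
  refine ⟨8 * (C0 + C1), by linarith, fun x p => ?_⟩
  have hcube : (1 + |p|)^3 ≤ 8 * (1 + ‖mA x p‖)^3 := by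
    have h := pow_le_pow_left₀ (by positivity) (one_add_abs_le x p) 3
    calc (1 + |p|)^3 ≤ (2 * (1 + ‖mA x p‖))^3 := h
      _ = 8 * (1 + ‖mA x p‖)^3 := by ring
  have hp2 : (0:ℝ) < 1 + p^2 := by positivity
  have hkey0 : (1 + |p|)^3 * ‖F (mA x p)‖ ≤ 8 * C0 := by
    have := h0 (mA x p)
    rw [norm_iteratedFDeriv_zero] at this
    nlinarith [norm_nonneg (F (mA x p)), pow_nonneg (add_nonneg zero_le_one (norm_nonneg (mA x p))) 3]
  have hkey1 : (1 + |p|)^3 * ‖fderiv ℝ (⇑F) (mA x p)‖ ≤ 8 * C1 := by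
    have := h1 (mA x p)
    have hn : ‖iteratedFDeriv ℝ 1 (⇑F) (mA x p)‖ = ‖fderiv ℝ (⇑F) (mA x p)‖ := by
      rw [← norm_iteratedFDeriv_fderiv (n := 0), norm_iteratedFDeriv_zero]
    rw [hn] at this
    nlinarith [norm_nonneg (fderiv ℝ (⇑F) (mA x p)), pow_nonneg (add_nonneg zero_le_one (norm_nonneg (mA x p))) 3]
  have hle : 1 + p^2 ≤ (1 + |p|)^3 := by nlinarith [abs_nonneg p, _root_.sq_abs p]
  have hle2 : |p| * (1 + p^2) ≤ (1 + |p|)^3 := by nlinarith [abs_nonneg p, _root_.sq_abs p]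
  refine ⟨?_, ?_, ?_⟩
  · rw [le_div_iff₀ hp2]
    nlinarith [mul_le_mul_of_nonneg_left hle (norm_nonneg (F (mA x p)))]
  · rw [le_div_iff₀ hp2]
    nlinarith [mul_le_mul_of_nonneg_left hle2 (norm_nonneg (F (mA x p)))]
  · rw [le_div_iff₀ hp2]
    nlinarith [mul_le_mul_of_nonneg_left hle (norm_nonneg (fderiv ℝ (⇑F) (mA x p)))]

lemma integrable_of_bound {h : ℝ → ℂ} (hc : Continuous h) (C : ℝ)
    (hb : ∀ p, ‖h p‖ ≤ C / (1 + p^2)) : Integrable h := by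
  refine (integrable_inv_one_add_sq.const_mul C).mono' hc.aestronglyMeasurable ?_
  filter_upwards with p
  simpa [div_eq_mul_inv] using hb p

lemma tendsto_bound_atTop (C : ℝ) :
    Tendsto (fun p : ℝ => C / (1 + p^2)) atTop (nhds 0) := by
  have hsq : Tendsto (fun p : ℝ => p^2) atTop atTop :=
    tendsto_pow_atTop (n := 2) (by norm_num)
  exact Tendsto.div_atTop tendsto_const_nhds (tendsto_atTop_add_const_left atTop 1 hsq)

lemma tendsto_bound_atBot (C : ℝ) :
    Tendsto (fun p : ℝ => C / (1 + p^2)) atBot (nhds 0) := by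
  have hsq : Tendsto (fun p : ℝ => p^2) atBot atTop := by
    have h0 : Tendsto (fun x : ℝ => x^2) atTop atTop := tendsto_pow_atTop (n := 2) (by norm_num)
    have h := h0.comp (tendsto_neg_atBot_atTop : Tendsto (fun x : ℝ => -x) atBot atTop)
    exact h.congr fun p => by simp [Function.comp]
  exact Tendsto.div_atTop tendsto_const_nhds (tendsto_atTop_add_const_left atBot 1 hsq)

lemma integral_deriv_zero {h h' : ℝ → ℂ} (hd : ∀ p, HasDerivAt h (h' p) p)
    (hi : Integrable h') (C : ℝ) (hb : ∀ p, ‖h p‖ ≤ C / (1 + p^2)) :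
    ∫ p : ℝ, h' p = 0 := by
  have httop : Tendsto h atTop (nhds 0) := squeeze_zero_norm hb (tendsto_bound_atTop C)
  have htbot : Tendsto h atBot (nhds 0) := squeeze_zero_norm hb (tendsto_bound_atBot C)
  have hA : Tendsto (fun n : ℝ => ∫ p in (-n)..n, h' p) atTop (nhds (∫ p : ℝ, h' p)) :=
    intervalIntegral_tendsto_integral hi tendsto_neg_atTop_atBot tendsto_id
  have hB : ∀ n : ℝ, ∫ p in (-n)..n, h' p = h n - h (-n) := fun n =>
    intervalIntegral.integral_eq_sub_of_hasDerivAt (fun p _ => hd p) (hi.intervalIntegrable)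
  have hC : Tendsto (fun n : ℝ => h n - h (-n)) atTop (nhds 0) := by
    simpa using httop.sub (htbot.comp tendsto_neg_atTop_atBot)
  have := hA.congr (fun n => hB n)
  exact tendsto_nhds_unique this hC

lemma hasDerivAt_mA_p (x p : ℝ) :
    HasDerivAt (fun p => mA x p) ((Real.sqrt 2)⁻¹, -(Real.sqrt 2)⁻¹) p := by
  have h1 : HasDerivAt (fun p : ℝ => (x + p)/Real.sqrt 2) ((Real.sqrt 2)⁻¹) p := by
    simpa [one_div] using ((hasDerivAt_id p).const_add x).div_const (Real.sqrt 2)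
  have h2 : HasDerivAt (fun p : ℝ => (x - p)/Real.sqrt 2) (-(Real.sqrt 2)⁻¹) p := by
    simpa [one_div, neg_div] using ((hasDerivAt_id p).const_sub x).div_const (Real.sqrt 2)
  exact h1.prodMk h2

lemma hasDerivAt_mA_x (x p : ℝ) :
    HasDerivAt (fun x => mA x p) ((Real.sqrt 2)⁻¹, (Real.sqrt 2)⁻¹) x := by
  have h1 : HasDerivAt (fun x : ℝ => (x + p)/Real.sqrt 2) ((Real.sqrt 2)⁻¹) x := by
    simpa [one_div] using ((hasDerivAt_id x).add_const p).div_const (Real.sqrt 2)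
  have h2 : HasDerivAt (fun x : ℝ => (x - p)/Real.sqrt 2) ((Real.sqrt 2)⁻¹) x := by
    simpa [one_div] using ((hasDerivAt_id x).sub_const p).div_const (Real.sqrt 2)
  exact h1.prodMk h2

lemma hasDerivAt_F_p (F : SchwartzMap (ℝ × ℝ) ℂ) (x p : ℝ) :
    HasDerivAt (fun p => F (mA x p))
      (fderiv ℝ (⇑F) (mA x p) ((Real.sqrt 2)⁻¹, -(Real.sqrt 2)⁻¹)) p :=
  (F.differentiable.differentiableAt.hasFDerivAt).comp_hasDerivAt p (hasDerivAt_mA_p x p)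

lemma hasDerivAt_F_x (F : SchwartzMap (ℝ × ℝ) ℂ) (x p : ℝ) :
    HasDerivAt (fun x => F (mA x p))
      (fderiv ℝ (⇑F) (mA x p) ((Real.sqrt 2)⁻¹, (Real.sqrt 2)⁻¹)) x :=
  (F.differentiable.differentiableAt.hasFDerivAt).comp_hasDerivAt x (hasDerivAt_mA_x x p)

lemma hasDerivAt_cexp_p (y p : ℝ) :
    HasDerivAt (fun p : ℝ => Complex.exp (Complex.I * p * y))
      (Complex.I * y * Complex.exp (Complex.I * p * y)) p := by
  have hr : HasDerivAt (fun p : ℝ => ((p : ℂ))) 1 p := by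
    simpa using (hasDerivAt_id p).ofReal_comp
  have h1 : HasDerivAt (fun p : ℝ => Complex.I * p * y)
      (Complex.I * y) p := by
    have h := hr.const_mul (Complex.I * (y:ℂ))
    simpa using h.congr_of_eventuallyEq (Filter.Eventually.of_forall fun t => by ring)
  have h2 := h1.cexp
  rw [show Complex.I * y * Complex.exp (Complex.I * p * y)
      = Complex.exp (Complex.I * p * y) * (Complex.I * y) from by ring]
  exact h2

lemma hasDerivAt_cexp_y (y p : ℝ) :
    HasDerivAt (fun y : ℝ => Complex.exp (Complex.I * p * y))
      (Complex.I * p * Complex.exp (Complex.I * p * y)) y := by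
  have hr : HasDerivAt (fun y : ℝ => ((y : ℂ))) 1 y := by
    simpa using (hasDerivAt_id y).ofReal_comp
  have h1 : HasDerivAt (fun y : ℝ => Complex.I * p * y)
      (Complex.I * p) y := by
    have h := hr.const_mul (Complex.I * (p:ℂ))
    simpa using h.congr_of_eventuallyEq (Filter.Eventually.of_forall fun t => by ring)
  have h2 := h1.cexp
  rw [show Complex.I * p * Complex.exp (Complex.I * p * y)
      = Complex.exp (Complex.I * p * y) * (Complex.I * p) from by ring]
  exact h2

lemma cont_mA (x : ℝ) : Continuous fun p : ℝ => mA x p := by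
  unfold mA; fun_prop

lemma cont_mA' (p : ℝ) : Continuous fun x : ℝ => mA x p := by
  unfold mA; fun_prop

lemma cont_cexp (y : ℝ) : Continuous fun p : ℝ => Complex.exp (Complex.I * p * y) := by
  fun_prop

lemma abs_sqrt2_inv : |Real.sqrt 2|⁻¹ ≤ 1 := by
  have hs : (1:ℝ) ≤ Real.sqrt 2 := by
    nlinarith [sqrt2_mul_self, Real.sqrt_nonneg 2]
  rw [_root_.abs_of_nonneg (Real.sqrt_nonneg 2)]
  exact inv_le_one_of_one_le₀ hs

lemma norm_ss : ‖(((Real.sqrt 2)⁻¹ : ℝ), ((Real.sqrt 2)⁻¹ : ℝ))‖ ≤ 1 := by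
  simp [Prod.norm_def, Real.norm_eq_abs, abs_sqrt2_inv]

lemma norm_ss' : ‖(((Real.sqrt 2)⁻¹ : ℝ), (-(Real.sqrt 2)⁻¹ : ℝ))‖ ≤ 1 := by
  simp [Prod.norm_def, Real.norm_eq_abs, abs_sqrt2_inv]

lemma cont_fderiv_app (F : SchwartzMap (ℝ × ℝ) ℂ) (x : ℝ) (v : ℝ × ℝ) :
    Continuous fun p : ℝ => fderiv ℝ (⇑F) (mA x p) v := by
  have hdc : Continuous (fderiv ℝ (⇑F)) := (F.smooth 1).continuous_fderiv (by norm_num)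
  exact (ContinuousLinearMap.apply ℝ ℂ v).continuous.comp (hdc.comp (cont_mA x))

lemma hasDerivAt_int_x (F : SchwartzMap (ℝ × ℝ) ℂ) (y x : ℝ) :
    HasDerivAt (fun t => ∫ p : ℝ, Complex.exp (Complex.I * p * y) * F (mA t p))
      (∫ p : ℝ, Complex.exp (Complex.I * p * y) *
        fderiv ℝ (⇑F) (mA x p) ((Real.sqrt 2)⁻¹, (Real.sqrt 2)⁻¹)) x := by
  obtain ⟨C, hC, hmaster⟩ := master F
  refine (hasDerivAt_integral_of_dominated_loc_of_deriv_le
    (F' := fun t p => Complex.exp (Complex.I * p * y) *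
        fderiv ℝ (⇑F) (mA t p) ((Real.sqrt 2)⁻¹, (Real.sqrt 2)⁻¹))
    (bound := fun p => C / (1 + p^2)) (Metric.ball_mem_nhds x one_pos) ?_ ?_ ?_ ?_ ?_ ?_).2
  · filter_upwards with t
    exact ((cont_cexp y).mul (F.continuous.comp (cont_mA t))).aestronglyMeasurable
  · exact integrable_of_bound ((cont_cexp y).mul (F.continuous.comp (cont_mA x))) C
      (fun p => by rw [norm_mul, norm_cexp_Ipy, one_mul]; exact (hmaster x p).1)
  · exact ((cont_cexp y).mul (cont_fderiv_app F x _)).aestronglyMeasurable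
  · filter_upwards with p
    intro t _
    rw [norm_mul, norm_cexp_Ipy, one_mul]
    calc ‖fderiv ℝ (⇑F) (mA t p) ((Real.sqrt 2)⁻¹, (Real.sqrt 2)⁻¹)‖
        ≤ ‖fderiv ℝ (⇑F) (mA t p)‖ * ‖(((Real.sqrt 2)⁻¹:ℝ), ((Real.sqrt 2)⁻¹:ℝ))‖ :=
          (fderiv ℝ (⇑F) (mA t p)).le_opNorm _
      _ ≤ ‖fderiv ℝ (⇑F) (mA t p)‖ * 1 :=
          mul_le_mul_of_nonneg_left norm_ss (norm_nonneg _)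
      _ ≤ C / (1 + p^2) := by rw [mul_one]; exact (hmaster t p).2.2
  · simpa [div_eq_mul_inv] using integrable_inv_one_add_sq.const_mul C
  · filter_upwards with p
    intro t _
    exact (hasDerivAt_F_x F t p).const_mul (Complex.exp (Complex.I * p * y))

lemma hasDerivAt_int_y (F : SchwartzMap (ℝ × ℝ) ℂ) (x y : ℝ) :
    HasDerivAt (fun ξ : ℝ => ∫ p : ℝ, Complex.exp (Complex.I * p * ξ) * F (mA x p))
      (∫ p : ℝ, (Complex.I * p * Complex.exp (Complex.I * p * y)) * F (mA x p)) y := by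
  obtain ⟨C, hC, hmaster⟩ := master F
  refine (hasDerivAt_integral_of_dominated_loc_of_deriv_le
    (F' := fun (ξ : ℝ) (p : ℝ) => (Complex.I * p * Complex.exp (Complex.I * p * ξ)) * F (mA x p))
    (bound := fun p => C / (1 + p^2)) (Metric.ball_mem_nhds y one_pos) ?_ ?_ ?_ ?_ ?_ ?_).2
  · filter_upwards with ξ
    exact ((cont_cexp ξ).mul (F.continuous.comp (cont_mA x))).aestronglyMeasurable
  · exact integrable_of_bound ((cont_cexp y).mul (F.continuous.comp (cont_mA x))) C
      (fun p => by rw [norm_mul, norm_cexp_Ipy, one_mul]; exact (hmaster x p).1)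
  · refine Continuous.aestronglyMeasurable ?_
    have : Continuous fun p : ℝ => Complex.I * p * Complex.exp (Complex.I * p * y) := by
      fun_prop
    exact this.mul (F.continuous.comp (cont_mA x))
  · filter_upwards with p
    intro ξ _
    have : ‖Complex.I * p * Complex.exp (Complex.I * p * ξ)‖ = |p| := by
      rw [norm_mul, norm_cexp_Ipy, mul_one, norm_mul]
      simp
    rw [norm_mul, this]
    exact (hmaster x p).2.1
  · simpa [div_eq_mul_inv] using integrable_inv_one_add_sq.const_mul C
  · filter_upwards with p
    intro ξ _
    exact (hasDerivAt_cexp_y ξ p).mul_const (F (mA x p))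

lemma a2dag_eq (F : SchwartzMap (ℝ × ℝ) ℂ) (u v : ℝ) :
    a2dag (fun a b => F (a, b)) u v
      = (Real.sqrt 2 : ℂ)⁻¹ * ((v:ℂ) * F (u, v) - fderiv ℝ (⇑F) (u, v) (0, 1)) := by
  have hd : HasDerivAt (fun t => F (u, t)) (fderiv ℝ (⇑F) (u, v) ((0:ℝ), (1:ℝ))) v :=
    (F.differentiable.differentiableAt.hasFDerivAt).comp_hasDerivAt v
      ((hasDerivAt_const v u).prodMk (hasDerivAt_id v))
  unfold a2dag
  rw [hd.deriv]

end WignerAux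

set_option maxHeartbeats 1000000

/-- The extended Wigner transform intertwines a₂† with A₋†. -/
theorem extW_intertwine_a2dag (F : SchwartzMap (ℝ × ℝ) ℂ) (x y : ℝ) :
    Amdag (ExtW (fun a b => F (a, b))) x y
      = ExtW (a2dag (fun a b => F (a, b))) x y := by
  obtain ⟨C, hC, hmaster⟩ := master F
  have hs2 : Real.sqrt 2 ≠ 0 := by positivity
  have h2c : (Real.sqrt 2 : ℂ) * (Real.sqrt 2 : ℂ) = 2 := by
    rw [← Complex.ofReal_mul, sqrt2_mul_self]; norm_num
  have hs2c : (Real.sqrt 2 : ℂ) ≠ 0 := by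
    simpa using Complex.ofReal_ne_zero.mpr hs2
  set c : ℂ := ((Real.sqrt (2 * Real.pi) : ℝ) : ℂ)⁻¹ with hcdef
  set sr : ℝ := (Real.sqrt 2)⁻¹ with hsr
  -- basic integrands
  set g0 : ℝ → ℂ := fun p => Complex.exp (Complex.I * p * y) * F (mA x p) with hg0
  set g1 : ℝ → ℂ := fun p => Complex.exp (Complex.I * p * y) * fderiv ℝ (⇑F) (mA x p) (sr, sr) with hg1
  set g2 : ℝ → ℂ := fun p => (Complex.I * p * Complex.exp (Complex.I * p * y)) * F (mA x p) with hg2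
  set g3 : ℝ → ℂ := fun p => Complex.exp (Complex.I * p * y) * fderiv ℝ (⇑F) (mA x p) (sr, -sr) with hg3
  -- integrability
  have int0 : Integrable g0 :=
    integrable_of_bound ((cont_cexp y).mul (F.continuous.comp (cont_mA x))) C
      (fun p => by rw [hg0, norm_mul, norm_cexp_Ipy, one_mul]; exact (hmaster x p).1)
  have int1 : Integrable g1 := by
    refine integrable_of_bound ((cont_cexp y).mul (cont_fderiv_app F x _)) C (fun p => ?_)
    rw [hg1, norm_mul, norm_cexp_Ipy, one_mul]
    calc ‖fderiv ℝ (⇑F) (mA x p) (sr, sr)‖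
        ≤ ‖fderiv ℝ (⇑F) (mA x p)‖ * ‖((sr:ℝ), (sr:ℝ))‖ := (fderiv ℝ (⇑F) (mA x p)).le_opNorm _
      _ ≤ ‖fderiv ℝ (⇑F) (mA x p)‖ * 1 := mul_le_mul_of_nonneg_left norm_ss (norm_nonneg _)
      _ ≤ C / (1 + p^2) := by rw [mul_one]; exact (hmaster x p).2.2
  have int2 : Integrable g2 := by
    refine integrable_of_bound ?_ C (fun p => ?_)
    · have hcont : Continuous fun p : ℝ => Complex.I * p * Complex.exp (Complex.I * p * y) := by
        fun_prop
      exact hcont.mul (F.continuous.comp (cont_mA x))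
    · have hip : ‖Complex.I * p * Complex.exp (Complex.I * p * y)‖ = |p| := by
        rw [norm_mul, norm_cexp_Ipy, mul_one, norm_mul]; simp
      rw [hg2, norm_mul, hip]
      exact (hmaster x p).2.1
  have int3 : Integrable g3 := by
    refine integrable_of_bound ((cont_cexp y).mul (cont_fderiv_app F x _)) C (fun p => ?_)
    rw [hg3, norm_mul, norm_cexp_Ipy, one_mul]
    calc ‖fderiv ℝ (⇑F) (mA x p) (sr, -sr)‖
        ≤ ‖fderiv ℝ (⇑F) (mA x p)‖ * ‖((sr:ℝ), (-sr:ℝ))‖ := (fderiv ℝ (⇑F) (mA x p)).le_opNorm _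
      _ ≤ ‖fderiv ℝ (⇑F) (mA x p)‖ * 1 := mul_le_mul_of_nonneg_left norm_ss' (norm_nonneg _)
      _ ≤ C / (1 + p^2) := by rw [mul_one]; exact (hmaster x p).2.2
  -- integration by parts: ∫ (I y g0 + g3) = 0
  have hIBP : ∫ p : ℝ, (Complex.I * y * Complex.exp (Complex.I * p * y)) * F (mA x p)
      + Complex.exp (Complex.I * p * y) * fderiv ℝ (⇑F) (mA x p) (sr, -sr) = 0 := by
    refine integral_deriv_zero (h := g0) (fun p => ?_) ?_ C (fun p => ?_)
    · exact (hasDerivAt_cexp_p y p).mul (hasDerivAt_F_p F x p)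
    · refine Integrable.add ?_ int3
      have hcont : Continuous fun p : ℝ => (Complex.I * y * Complex.exp (Complex.I * p * y)) * F (mA x p) :=
        (by fun_prop : Continuous fun p : ℝ => Complex.I * y * Complex.exp (Complex.I * p * y)).mul
          (F.continuous.comp (cont_mA x))
      refine integrable_of_bound hcont (|y| * C) (fun p => ?_)
      have h1 : ‖Complex.I * y * Complex.exp (Complex.I * p * y)‖ = |y| := by
        rw [norm_mul, norm_cexp_Ipy, mul_one, norm_mul]; simp
      rw [norm_mul, h1, mul_div_assoc]
      exact mul_le_mul_of_nonneg_left (hmaster x p).1 (abs_nonneg y)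
    · rw [hg0, norm_mul, norm_cexp_Ipy, one_mul]; exact (hmaster x p).1
  -- derivative in x
  have hdx : HasDerivAt (fun t => ExtW (fun a b => F (a, b)) t y) (c * ∫ p : ℝ, g1 p) x := by
    exact (hasDerivAt_int_x F y x).const_mul c
  -- derivative in y
  have hdy : HasDerivAt (fun t => ExtW (fun a b => F (a, b)) x t) (c * ∫ p : ℝ, g2 p) y := by
    exact (hasDerivAt_int_y F x y).const_mul c
  have hG : ExtW (fun a b => F (a, b)) x y = c * ∫ p : ℝ, g0 p := rfl
  -- right-hand side
  have hRHS : ExtW (a2dag (fun a b => F (a, b))) x y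
      = c * ∫ p : ℝ, Complex.exp (Complex.I * p * y) *
          ((Real.sqrt 2 : ℂ)⁻¹ * ((((x - p)/Real.sqrt 2 : ℝ) : ℂ) * F (mA x p)
            - fderiv ℝ (⇑F) (mA x p) ((0:ℝ), (1:ℝ)))) := by
    rw [ExtW]
    congr 1
    refine integral_congr_ae (Filter.Eventually.of_forall fun p => ?_)
    show Complex.exp (Complex.I * p * y) *
        a2dag (fun a b => F (a, b)) ((x + p)/Real.sqrt 2) ((x - p)/Real.sqrt 2) = _
    rw [a2dag_eq F ((x + p)/Real.sqrt 2) ((x - p)/Real.sqrt 2)]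
    rfl
  -- pointwise identity
  have hlin : ∀ p : ℝ, fderiv ℝ (⇑F) (mA x p) (sr, -sr)
      = fderiv ℝ (⇑F) (mA x p) (sr, sr)
        - (Real.sqrt 2 : ℂ) * fderiv ℝ (⇑F) (mA x p) ((0:ℝ), (1:ℝ)) := by
    intro p
    have hvec : ((sr : ℝ), (-sr : ℝ)) = (sr, sr) - (Real.sqrt 2) • ((0:ℝ), (1:ℝ)) := by
      rw [Prod.ext_iff]
      constructor
      · simp
      · simp only [Prod.snd_sub, Prod.smul_snd, smul_eq_mul, mul_one]
        rw [hsr]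
        field_simp
        nlinarith [sqrt2_mul_self]
    rw [hvec, map_sub, ContinuousLinearMap.map_smul]
    rw [Complex.real_smul]
  have hpt : ∀ p : ℝ, Complex.exp (Complex.I * p * y) *
          ((Real.sqrt 2 : ℂ)⁻¹ * ((((x - p)/Real.sqrt 2 : ℝ) : ℂ) * F (mA x p)
            - fderiv ℝ (⇑F) (mA x p) ((0:ℝ), (1:ℝ))))
      = (1/2 : ℂ) * ((x:ℂ) * g0 p - g1 p - (Complex.I * y) * g0 p + Complex.I * g2 p)
        + (1/2 : ℂ) * ((Complex.I * y * Complex.exp (Complex.I * p * y)) * F (mA x p)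
            + Complex.exp (Complex.I * p * y) * fderiv ℝ (⇑F) (mA x p) (sr, -sr)) := by
    intro p
    rw [hg0, hg1, hg2, hlin p]
    push_cast
    have hI : Complex.I * Complex.I = -1 := Complex.I_mul_I
    field_simp
    ring_nf
    simp only [Complex.I_sq, show ((Real.sqrt 2 : ℂ))^2 = (2:ℂ) from by rw [sq]; exact h2c,
      show ((Real.sqrt 2 : ℂ))^3 = 2 * (Real.sqrt 2 : ℂ) from by rw [pow_succ, sq, h2c]]
    ring
  -- integrate the pointwise identity
  have hsplit : (∫ p : ℝ, Complex.exp (Complex.I * p * y) *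
          ((Real.sqrt 2 : ℂ)⁻¹ * ((((x - p)/Real.sqrt 2 : ℝ) : ℂ) * F (mA x p)
            - fderiv ℝ (⇑F) (mA x p) ((0:ℝ), (1:ℝ)))))
      = (1/2 : ℂ) * ((x:ℂ) * (∫ p : ℝ, g0 p) - (∫ p : ℝ, g1 p)
          - (Complex.I * y) * (∫ p : ℝ, g0 p) + Complex.I * (∫ p : ℝ, g2 p)) := by
    have intA : Integrable (fun p : ℝ => (x:ℂ) * g0 p - g1 p - (Complex.I * y) * g0 p
        + Complex.I * g2 p) :=
      (((int0.const_mul _).sub int1).sub (int0.const_mul _)).add (int2.const_mul _)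
    have intB : Integrable (fun p : ℝ => (Complex.I * y * Complex.exp (Complex.I * p * y)) * F (mA x p)
        + Complex.exp (Complex.I * p * y) * fderiv ℝ (⇑F) (mA x p) (sr, -sr)) := by
      refine Integrable.add ?_ int3
      have hcont : Continuous fun p : ℝ => (Complex.I * y * Complex.exp (Complex.I * p * y)) * F (mA x p) :=
        (by fun_prop : Continuous fun p : ℝ => Complex.I * y * Complex.exp (Complex.I * p * y)).mul
          (F.continuous.comp (cont_mA x))
      refine integrable_of_bound hcont (|y| * C) (fun p => ?_)
      have h1 : ‖Complex.I * y * Complex.exp (Complex.I * p * y)‖ = |y| := by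
        rw [norm_mul, norm_cexp_Ipy, mul_one, norm_mul]; simp
      rw [norm_mul, h1, mul_div_assoc]
      exact mul_le_mul_of_nonneg_left (hmaster x p).1 (abs_nonneg y)
    calc (∫ p : ℝ, Complex.exp (Complex.I * p * y) *
          ((Real.sqrt 2 : ℂ)⁻¹ * ((((x - p)/Real.sqrt 2 : ℝ) : ℂ) * F (mA x p)
            - fderiv ℝ (⇑F) (mA x p) ((0:ℝ), (1:ℝ)))))
        = ∫ p : ℝ, (1/2 : ℂ) * ((x:ℂ) * g0 p - g1 p - (Complex.I * y) * g0 p + Complex.I * g2 p)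
            + (1/2 : ℂ) * ((Complex.I * y * Complex.exp (Complex.I * p * y)) * F (mA x p)
              + Complex.exp (Complex.I * p * y) * fderiv ℝ (⇑F) (mA x p) (sr, -sr)) := by
          exact integral_congr_ae (Filter.Eventually.of_forall fun p => hpt p)
      _ = (∫ p : ℝ, (1/2 : ℂ) * ((x:ℂ) * g0 p - g1 p - (Complex.I * y) * g0 p + Complex.I * g2 p))
            + ∫ p : ℝ, (1/2 : ℂ) * ((Complex.I * y * Complex.exp (Complex.I * p * y)) * F (mA x p)
              + Complex.exp (Complex.I * p * y) * fderiv ℝ (⇑F) (mA x p) (sr, -sr)) := by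
          exact integral_add (intA.const_mul _) (intB.const_mul _)
      _ = (1/2 : ℂ) * ((x:ℂ) * (∫ p : ℝ, g0 p) - (∫ p : ℝ, g1 p)
            - (Complex.I * y) * (∫ p : ℝ, g0 p) + Complex.I * (∫ p : ℝ, g2 p)) := by
          have i01 : Integrable (fun p : ℝ => (x:ℂ) * g0 p - g1 p) := (int0.const_mul _).sub int1
          have i012 : Integrable (fun p : ℝ => (x:ℂ) * g0 p - g1 p - (Complex.I * y) * g0 p) :=
            i01.sub (int0.const_mul _)
          have eadd : (∫ p : ℝ, ((x:ℂ) * g0 p - g1 p - (Complex.I * y) * g0 p + Complex.I * g2 p))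
              = (∫ p : ℝ, ((x:ℂ) * g0 p - g1 p - (Complex.I * y) * g0 p)) + ∫ p : ℝ, Complex.I * g2 p :=
            integral_add i012 (int2.const_mul _)
          have es1 : (∫ p : ℝ, ((x:ℂ) * g0 p - g1 p - (Complex.I * y) * g0 p))
              = (∫ p : ℝ, ((x:ℂ) * g0 p - g1 p)) - ∫ p : ℝ, (Complex.I * y) * g0 p :=
            integral_sub i01 (int0.const_mul _)
          have es2 : (∫ p : ℝ, ((x:ℂ) * g0 p - g1 p))
              = (∫ p : ℝ, (x:ℂ) * g0 p) - ∫ p : ℝ, g1 p :=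
            integral_sub (int0.const_mul _) int1
          rw [integral_const_mul, integral_const_mul, hIBP, mul_zero, add_zero, eadd, es1, es2,
            integral_const_mul, integral_const_mul, integral_const_mul]
  -- finish
  rw [Amdag, hdx.deriv, hdy.deriv, hG, hRHS, hsplit]
  ring
end

section
/- The extended Wigner transform intertwines the annihilation operators: for every Schwartz function F : ℝ² → ℂ, A₊(W̃F) = W̃(a₁F) and A₋(W̃F) = W̃(a₂F), where a₁ = (1/√2)(x₁ + ∂/∂x₁), a₂ = (1/√2)(x₂ + ∂/∂x₂), A₊ = (1/2)(x + ∂/∂x − i(y + ∂/∂y)), A₋ = (1/2)(x + ∂/∂x + i(y + ∂/∂y)). -/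
open MeasureTheory
noncomputable def WigMap : (ℝ × ℝ) →L[ℝ] (ℝ × ℝ) :=
  ((Real.sqrt 2)⁻¹ • (ContinuousLinearMap.fst ℝ ℝ ℝ + ContinuousLinearMap.snd ℝ ℝ ℝ)).prod
  ((Real.sqrt 2)⁻¹ • (ContinuousLinearMap.fst ℝ ℝ ℝ - ContinuousLinearMap.snd ℝ ℝ ℝ))

lemma WigMap_apply (a b : ℝ) :
    WigMap (a, b) = ((a + b) / Real.sqrt 2, (a - b) / Real.sqrt 2) := by
  simp [WigMap, div_eq_inv_mul, smul_eq_mul, mul_add, mul_sub]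

lemma WigMap_invol (z : ℝ × ℝ) : WigMap (WigMap z) = z := by
  obtain ⟨a, b⟩ := z
  have h2 : Real.sqrt 2 * Real.sqrt 2 = 2 := Real.mul_self_sqrt (by norm_num)
  have h0 : Real.sqrt 2 ≠ 0 := by positivity
  rw [WigMap_apply, WigMap_apply, Prod.mk.injEq]
  constructor <;> field_simp <;> rw [sq, h2] <;> ring

lemma WigMap_upper : ∀ z : ℝ × ℝ, ‖z‖ ≤ ‖WigMap‖ * (1 + ‖WigMap z‖) ^ 1 := by
  intro z
  calc ‖z‖ = ‖WigMap (WigMap z)‖ := by rw [WigMap_invol]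
    _ ≤ ‖WigMap‖ * ‖WigMap z‖ := WigMap.le_opNorm _
    _ ≤ ‖WigMap‖ * (1 + ‖WigMap z‖) ^ 1 := by
        have : (0:ℝ) ≤ ‖WigMap‖ := norm_nonneg _
        nlinarith [norm_nonneg (WigMap z)]

/-- Composition with `WigMap` as a CLM on Schwartz space. -/
noncomputable def wigComp : SchwartzMap (ℝ × ℝ) ℂ →L[ℝ] SchwartzMap (ℝ × ℝ) ℂ :=
  SchwartzMap.compCLM ℝ WigMap.hasTemperateGrowth ⟨1, ‖WigMap‖, WigMap_upper⟩

lemma wigComp_apply (F : SchwartzMap (ℝ × ℝ) ℂ) (z : ℝ × ℝ) :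
    wigComp F z = F (WigMap z) := rfl

lemma key_bound (Φ : SchwartzMap (ℝ × ℝ) ℂ) (k : ℕ) :
    ∃ C : ℝ, 0 ≤ C ∧ ∀ t p : ℝ, |p| ^ k * ‖Φ (t, p)‖ ≤ C * (1 + p ^ 2)⁻¹ := by
  obtain ⟨C₁, hC₁pos, h₁⟩ := Φ.decay k 0
  obtain ⟨C₂, hC₂pos, h₂⟩ := Φ.decay (k + 2) 0
  refine ⟨C₁ + C₂, by positivity, fun t p => ?_⟩
  have hpos : (0:ℝ) < 1 + p ^ 2 := by positivity
  rw [← div_eq_mul_inv, le_div_iff₀ hpos]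
  have hp : |p| ≤ ‖((t, p) : ℝ × ℝ)‖ := by
    rw [Prod.norm_def]
    simpa [Real.norm_eq_abs] using le_max_right ‖t‖ |p|
  have h₁' := h₁ (t, p)
  have h₂' := h₂ (t, p)
  rw [norm_iteratedFDeriv_zero] at h₁' h₂'
  calc |p| ^ k * ‖Φ (t, p)‖ * (1 + p ^ 2)
      = |p| ^ k * ‖Φ (t, p)‖ + |p| ^ (k + 2) * ‖Φ (t, p)‖ := by
        rw [pow_add, _root_.sq_abs]; ring
    _ ≤ ‖((t, p) : ℝ × ℝ)‖ ^ k * ‖Φ (t, p)‖ + ‖((t, p) : ℝ × ℝ)‖ ^ (k + 2) * ‖Φ (t, p)‖ := by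
        gcongr <;> exact abs_nonneg p
    _ ≤ C₁ + C₂ := add_le_add h₁' h₂'

lemma hasDerivAt_cexp_mul (a : ℂ) (t : ℝ) :
    HasDerivAt (fun s : ℝ => Complex.exp (a * s)) (a * Complex.exp (a * t)) t := by
  have h : HasDerivAt (fun s : ℝ => a * (s : ℂ)) (a * 1) t :=
    (Complex.ofRealCLM.hasDerivAt).const_mul a
  simpa [mul_comm] using h.cexp

lemma hasDerivAt_slice_fst (Φ : SchwartzMap (ℝ × ℝ) ℂ) (t p : ℝ) :
    HasDerivAt (fun s : ℝ => Φ (s, p)) (fderiv ℝ Φ (t, p) (1, 0)) t := by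
  have h := ((Φ.differentiable.differentiableAt).hasFDerivAt (x := (t, p))).comp_hasDerivAt t
    ((hasDerivAt_id t).prodMk (hasDerivAt_const t p))
  exact h

lemma hasDerivAt_slice_snd (Φ : SchwartzMap (ℝ × ℝ) ℂ) (t p : ℝ) :
    HasDerivAt (fun s : ℝ => Φ (t, s)) (fderiv ℝ Φ (t, p) (0, 1)) p := by
  have h := ((Φ.differentiable.differentiableAt).hasFDerivAt (x := (t, p))).comp_hasDerivAt p
    ((hasDerivAt_const p t).prodMk (hasDerivAt_id p))
  exact h

lemma norm_exp_I_of_re_zero (z : ℂ) (h : z.re = 0) : ‖Complex.exp z‖ = 1 := by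
  rw [Complex.norm_exp, h, Real.exp_zero]

lemma slice_integrable (Φ : SchwartzMap (ℝ × ℝ) ℂ) (x : ℝ) (g : ℝ → ℂ)
    (hg : Continuous g) (B : ℝ) (k : ℕ) (hB : ∀ p, ‖g p‖ ≤ B * |p| ^ k) :
    Integrable (fun p => g p * Φ (x, p)) := by
  obtain ⟨C, hC0, hC⟩ := key_bound Φ k
  have hB0 : 0 ≤ B := by
    have := (norm_nonneg (g 1)).trans (hB 1)
    simpa using this
  apply Integrable.mono' ((integrable_inv_one_add_sq).const_mul (B * C))
  · exact (hg.mul (Φ.continuous.comp (by fun_prop))).aestronglyMeasurable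
  · filter_upwards with p
    rw [norm_mul]
    calc ‖g p‖ * ‖Φ (x, p)‖ ≤ (B * |p| ^ k) * ‖Φ (x, p)‖ := by
          gcongr; exact hB p
      _ = B * (|p| ^ k * ‖Φ (x, p)‖) := by ring
      _ ≤ B * (C * (1 + p ^ 2)⁻¹) := mul_le_mul_of_nonneg_left (hC x p) hB0
      _ = B * C * (1 + p ^ 2)⁻¹ := by ring

lemma fderiv_wigComp (F : SchwartzMap (ℝ × ℝ) ℂ) (z : ℝ × ℝ) :
    fderiv ℝ (wigComp F) z = (fderiv ℝ F (WigMap z)).comp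
      (WigMap : (ℝ × ℝ) →L[ℝ] (ℝ × ℝ)) := by
  have h : HasFDerivAt (⇑(wigComp F)) ((fderiv ℝ F (WigMap z)).comp
      (WigMap : (ℝ × ℝ) →L[ℝ] (ℝ × ℝ))) z :=
    ((F.differentiable.differentiableAt).hasFDerivAt).comp z (WigMap.hasFDerivAt)
  exact h.fderiv

lemma WigMap_one_zero :
    WigMap ((1:ℝ), (0:ℝ)) = (Real.sqrt 2)⁻¹ • (((1:ℝ), (0:ℝ)) + ((0:ℝ), (1:ℝ))) := by
  rw [WigMap_apply]
  rw [Prod.smul_mk, Prod.mk_add_mk]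
  norm_num [div_eq_inv_mul]

lemma WigMap_zero_one :
    WigMap ((0:ℝ), (1:ℝ)) = (Real.sqrt 2)⁻¹ • (((1:ℝ), (0:ℝ)) - ((0:ℝ), (1:ℝ))) := by
  rw [WigMap_apply]
  rw [Prod.mk_sub_mk, Prod.smul_mk]
  norm_num [div_eq_inv_mul]

lemma clm_WigMap_one_zero (L : (ℝ × ℝ) →L[ℝ] ℂ) :
    L (WigMap ((1:ℝ), (0:ℝ))) = (Real.sqrt 2 : ℂ)⁻¹ * (L (1, 0) + L (0, 1)) := by
  rw [WigMap_one_zero, L.map_smul, map_add, Complex.real_smul, Complex.ofReal_inv]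

lemma clm_WigMap_zero_one (L : (ℝ × ℝ) →L[ℝ] ℂ) :
    L (WigMap ((0:ℝ), (1:ℝ))) = (Real.sqrt 2 : ℂ)⁻¹ * (L (1, 0) - L (0, 1)) := by
  rw [WigMap_zero_one, L.map_smul, map_sub, Complex.real_smul, Complex.ofReal_inv]

/-- The extended Wigner transform intertwines the annihilation operators. -/
theorem extW_intertwine_annihilation (F : SchwartzMap (ℝ × ℝ) ℂ) (x y : ℝ) :
    Apop (ExtW (fun a b => F (a, b))) x y
        = ExtW (a1op (fun a b => F (a, b))) x y ∧
    Amop (ExtW (fun a b => F (a, b))) x y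
        = ExtW (a2op (fun a b => F (a, b))) x y := by
  have hs2 : (Real.sqrt 2 : ℂ) * (Real.sqrt 2 : ℂ) = 2 := by
    rw [← Complex.ofReal_mul, Real.mul_self_sqrt (by norm_num : (0:ℝ) ≤ 2)]
    norm_num
  have hsne : (Real.sqrt 2 : ℂ) ≠ 0 := by
    simp only [ne_eq, Complex.ofReal_eq_zero]
    positivity
  set c : ℂ := (Real.sqrt (2 * Real.pi) : ℂ)⁻¹ with hc
  set Ψ : SchwartzMap (ℝ × ℝ) ℂ := wigComp F with hPsi
  set Ψ₁ : SchwartzMap (ℝ × ℝ) ℂ := LineDeriv.lineDerivOp ((1:ℝ), (0:ℝ)) Ψ with hPsi1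
  set Ψ₂ : SchwartzMap (ℝ × ℝ) ℂ := LineDeriv.lineDerivOp ((0:ℝ), (1:ℝ)) Ψ with hPsi2
  have hΨapp : ∀ t p : ℝ, Ψ (t, p) = F ((t + p) / Real.sqrt 2, (t - p) / Real.sqrt 2) := by
    intro t p
    rw [hPsi, wigComp_apply, WigMap_apply]
  have hΨ₁app : ∀ t p : ℝ, Ψ₁ (t, p) = fderiv ℝ Ψ (t, p) (1, 0) := by
    intro t p
    rw [hPsi1, SchwartzMap.lineDerivOp_apply_eq_fderiv]
  have hΨ₂app : ∀ t p : ℝ, Ψ₂ (t, p) = fderiv ℝ Ψ (t, p) (0, 1) := by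
    intro t p
    rw [hPsi2, SchwartzMap.lineDerivOp_apply_eq_fderiv]
  have heCont : Continuous (fun p : ℝ => Complex.exp (Complex.I * p * y)) := by fun_prop
  have hcontSlice : ∀ (Φ : SchwartzMap (ℝ × ℝ) ℂ) (t : ℝ), Continuous (fun p : ℝ => Φ (t, p)) :=
    fun Φ t => Φ.continuous.comp (continuous_const.prodMk continuous_id)
  have hcontE2 : ∀ t : ℝ, Continuous (fun p : ℝ => Complex.exp (Complex.I * p * t)) := by
    intro t; fun_prop
  have heNorm : ∀ (p η : ℝ), ‖Complex.exp (Complex.I * p * η)‖ = 1 := by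
    intro p η
    apply norm_exp_I_of_re_zero
    simp [Complex.mul_re]
  -- integrability of the basic summands
  have hiS0 : Integrable (fun p : ℝ => Complex.exp (Complex.I * p * y) * Ψ (x, p)) :=
    slice_integrable Ψ x _ heCont 1 0 (fun p => by simp [heNorm p y])
  have hiS1 : Integrable (fun p : ℝ => Complex.exp (Complex.I * p * y) * Ψ₁ (x, p)) :=
    slice_integrable Ψ₁ x _ heCont 1 0 (fun p => by simp [heNorm p y])
  have hiS2 : Integrable (fun p : ℝ => Complex.exp (Complex.I * p * y) * Ψ₂ (x, p)) :=
    slice_integrable Ψ₂ x _ heCont 1 0 (fun p => by simp [heNorm p y])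
  have hiSB : Integrable (fun p : ℝ => (p:ℂ) * Complex.exp (Complex.I * p * y) * Ψ (x, p)) := by
    have := slice_integrable Ψ x (fun p : ℝ => (p:ℂ) * Complex.exp (Complex.I * p * y))
      (by fun_prop) 1 1 (fun p => by
        simp [norm_mul, heNorm p y, Complex.norm_real, Real.norm_eq_abs])
    simpa [mul_assoc] using this
  set I0 : ℂ := ∫ p : ℝ, Complex.exp (Complex.I * p * y) * Ψ (x, p) with hI0
  set I1 : ℂ := ∫ p : ℝ, Complex.exp (Complex.I * p * y) * Ψ₁ (x, p) with hI1
  set I2 : ℂ := ∫ p : ℝ, Complex.exp (Complex.I * p * y) * Ψ₂ (x, p) with hI2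
  set IB : ℂ := ∫ p : ℝ, (p:ℂ) * Complex.exp (Complex.I * p * y) * Ψ (x, p) with hIB
  -- value of the extended Wigner transform
  have hval : ∀ t η : ℝ, ExtW (fun a b => F (a, b)) t η
      = c * ∫ p : ℝ, Complex.exp (Complex.I * p * η) * Ψ (t, p) := by
    intro t η
    rw [ExtW, ← hc]
    congr 1
    refine integral_congr_ae (Filter.Eventually.of_forall fun p => ?_)
    simp only [hΨapp]
  -- derivative in the first variable
  have hD1 : HasDerivAt (fun t => ExtW (fun a b => F (a, b)) t y) (c * I1) x := by
    obtain ⟨C, hC0, hC⟩ := key_bound Ψ₁ 0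
    have key := hasDerivAt_integral_of_dominated_loc_of_deriv_le (s := Metric.ball x 1) (μ := volume)
      (x₀ := x)
      (F := fun (t : ℝ) (p : ℝ) => Complex.exp (Complex.I * p * y) * Ψ (t, p))
      (F' := fun (t : ℝ) (p : ℝ) => Complex.exp (Complex.I * p * y) * Ψ₁ (t, p))
      (bound := fun p => C * (1 + p ^ 2)⁻¹)
      (Metric.ball_mem_nhds _ one_pos)
      (Filter.Eventually.of_forall fun t =>
        (heCont.mul (hcontSlice Ψ t)).aestronglyMeasurable)
      hiS0
      ((heCont.mul (hcontSlice Ψ₁ x)).aestronglyMeasurable)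
      (Filter.Eventually.of_forall fun p t _ => by
        rw [norm_mul, heNorm p y, one_mul]
        simpa using hC t p)
      ((integrable_inv_one_add_sq).const_mul C)
      (Filter.Eventually.of_forall fun p t _ => by
        have h := (hasDerivAt_slice_fst Ψ t p).const_mul (Complex.exp (Complex.I * p * y))
        show HasDerivAt (fun s : ℝ => Complex.exp (Complex.I * p * y) * Ψ (s, p))
          (Complex.exp (Complex.I * p * y) * Ψ₁ (t, p)) t
        rw [hΨ₁app]
        exact h)
    have hfun : (fun t => ExtW (fun a b => F (a, b)) t y)
        = fun t => c * ∫ p : ℝ, Complex.exp (Complex.I * p * y) * Ψ (t, p) :=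
      funext fun t => hval t y
    rw [hfun, hI1]
    exact key.2.const_mul c
  -- derivative in the second variable
  have hD2 : HasDerivAt (fun t => ExtW (fun a b => F (a, b)) x t) (c * (Complex.I * IB)) y := by
    obtain ⟨C, hC0, hC⟩ := key_bound Ψ 1
    have key := hasDerivAt_integral_of_dominated_loc_of_deriv_le (s := Metric.ball y 1) (μ := volume)
      (x₀ := y)
      (F := fun (t : ℝ) (p : ℝ) => Complex.exp (Complex.I * p * t) * Ψ (x, p))
      (F' := fun (t : ℝ) (p : ℝ) => Complex.I * p * Complex.exp (Complex.I * p * t) * Ψ (x, p))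
      (bound := fun p => C * (1 + p ^ 2)⁻¹)
      (Metric.ball_mem_nhds _ one_pos)
      (Filter.Eventually.of_forall fun t =>
        ((hcontE2 t).mul (hcontSlice Ψ x)).aestronglyMeasurable)
      hiS0
      (((continuous_const.mul Complex.continuous_ofReal).mul (hcontE2 y)).mul
        (hcontSlice Ψ x)).aestronglyMeasurable
      (Filter.Eventually.of_forall fun p t _ => by
        have : ‖Complex.I * (p:ℂ) * Complex.exp (Complex.I * p * t) * Ψ (x, p)‖
            = |p| * ‖Ψ (x, p)‖ := by
          rw [norm_mul, norm_mul, heNorm p t, mul_one, norm_mul]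
          simp [Complex.norm_real, Real.norm_eq_abs]
        rw [this]
        simpa using hC x p)
      ((integrable_inv_one_add_sq).const_mul C)
      (Filter.Eventually.of_forall fun p t _ =>
        (hasDerivAt_cexp_mul (Complex.I * (p:ℂ)) t).mul_const (Ψ (x, p)))
    have hfun : (fun t => ExtW (fun a b => F (a, b)) x t)
        = fun t : ℝ => c * ∫ p : ℝ, Complex.exp (Complex.I * p * (t:ℝ)) * Ψ (x, p) :=
      funext fun t => hval x t
    have hIval : (∫ p : ℝ, Complex.I * p * Complex.exp (Complex.I * p * y) * Ψ (x, p))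
        = Complex.I * IB := by
      rw [hIB, ← integral_const_mul]
      refine integral_congr_ae (Filter.Eventually.of_forall fun p => ?_)
      ring
    rw [hfun]
    rw [← hIval] at *
    exact key.2.const_mul c
  -- integration by parts
  have hIBP : I2 = -(Complex.I * y) * I0 := by
    have hswap : (fun s : ℝ => Complex.exp (Complex.I * (y:ℝ) * s) * Ψ (x, s))
        = fun s : ℝ => Complex.exp (Complex.I * s * (y:ℝ)) * Ψ (x, s) := by
      funext s
      rw [mul_right_comm]
    have hderiv : ∀ q : ℝ, HasDerivAt (fun s : ℝ => Complex.exp (Complex.I * s * (y:ℝ)) * Ψ (x, s))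
        (Complex.I * y * (Complex.exp (Complex.I * q * y) * Ψ (x, q))
          + Complex.exp (Complex.I * q * y) * Ψ₂ (x, q)) q := by
      intro q
      have h0 := (hasDerivAt_cexp_mul (Complex.I * (y:ℝ)) q).mul (hasDerivAt_slice_snd Ψ x q)
      change HasDerivAt (fun s : ℝ => Complex.exp (Complex.I * (y:ℝ) * s) * Ψ (x, s)) _ q at h0
      rw [hswap] at h0
      have harg : Complex.I * (y:ℂ) * (q:ℂ) = Complex.I * (q:ℂ) * (y:ℂ) := mul_right_comm _ _ _
      rw [harg] at h0
      rw [hΨ₂app]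
      simpa [mul_assoc] using h0
    have hzero : (∫ q : ℝ, (Complex.I * y * (Complex.exp (Complex.I * q * y) * Ψ (x, q))
        + Complex.exp (Complex.I * q * y) * Ψ₂ (x, q))) = 0 :=
      integral_eq_zero_of_hasDerivAt_of_integrable hderiv
        ((hiS0.const_mul (Complex.I * y)).add hiS2) hiS0
    rw [integral_add (hiS0.const_mul (Complex.I * y)) hiS2, integral_const_mul,
      ← hI0, ← hI2] at hzero
    linear_combination hzero
  -- value at the point
  have hG : ExtW (fun a b => F (a, b)) x y = c * I0 := by
    rw [hval x y, hI0]
  -- pointwise identities for the annihilation operators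
  have hderiv_slice1 : ∀ u v : ℝ, deriv (fun t => F (t, v)) u = fderiv ℝ F (u, v) (1, 0) :=
    fun u v => (hasDerivAt_slice_fst F u v).deriv
  have hderiv_slice2 : ∀ u v : ℝ, deriv (fun t => F (u, t)) v = fderiv ℝ F (u, v) (0, 1) :=
    fun u v => (hasDerivAt_slice_snd F u v).deriv
  have hΨ₁val : ∀ t p : ℝ, Ψ₁ (t, p) = (Real.sqrt 2 : ℂ)⁻¹ *
      (fderiv ℝ F (WigMap (t, p)) (1, 0) + fderiv ℝ F (WigMap (t, p)) (0, 1)) := by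
    intro t p
    rw [hΨ₁app, hPsi, fderiv_wigComp, ContinuousLinearMap.comp_apply]
    exact clm_WigMap_one_zero _
  have hΨ₂val : ∀ t p : ℝ, Ψ₂ (t, p) = (Real.sqrt 2 : ℂ)⁻¹ *
      (fderiv ℝ F (WigMap (t, p)) (1, 0) - fderiv ℝ F (WigMap (t, p)) (0, 1)) := by
    intro t p
    rw [hΨ₂app, hPsi, fderiv_wigComp, ContinuousLinearMap.comp_apply]
    exact clm_WigMap_zero_one _
  have hpt1 : ∀ p : ℝ,
      a1op (fun a b => F (a, b)) ((x + p) / Real.sqrt 2) ((x - p) / Real.sqrt 2)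
      = (1/2 : ℂ) * (((x:ℂ) + (p:ℂ)) * Ψ (x, p) + Ψ₁ (x, p) + Ψ₂ (x, p)) := by
    intro p
    simp only [a1op]
    rw [hderiv_slice1, hΨapp, hΨ₁val, hΨ₂val, WigMap_apply]
    generalize F ((x + p) / Real.sqrt 2, (x - p) / Real.sqrt 2) = G
    generalize (fderiv ℝ (⇑F) ((x + p) / Real.sqrt 2, (x - p) / Real.sqrt 2)) (1, 0) = D1
    generalize (fderiv ℝ (⇑F) ((x + p) / Real.sqrt 2, (x - p) / Real.sqrt 2)) (0, 1) = D2
    push_cast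
    field_simp
    linear_combination (-(↑x * G) - ↑p * G) * hs2
  have hpt2 : ∀ p : ℝ,
      a2op (fun a b => F (a, b)) ((x + p) / Real.sqrt 2) ((x - p) / Real.sqrt 2)
      = (1/2 : ℂ) * (((x:ℂ) - (p:ℂ)) * Ψ (x, p) + Ψ₁ (x, p) - Ψ₂ (x, p)) := by
    intro p
    simp only [a2op]
    rw [hderiv_slice2, hΨapp, hΨ₁val, hΨ₂val, WigMap_apply]
    generalize F ((x + p) / Real.sqrt 2, (x - p) / Real.sqrt 2) = G
    generalize (fderiv ℝ (⇑F) ((x + p) / Real.sqrt 2, (x - p) / Real.sqrt 2)) (1, 0) = D1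
    generalize (fderiv ℝ (⇑F) ((x + p) / Real.sqrt 2, (x - p) / Real.sqrt 2)) (0, 1) = D2
    push_cast
    field_simp
    linear_combination (-(↑x * G) + ↑p * G) * hs2
  have hR1 : ExtW (a1op (fun a b => F (a, b))) x y
      = c * ((1/2 : ℂ) * ((x : ℂ) * I0 + IB + I1 + I2)) := by
    rw [ExtW, ← hc]
    have hfun : (fun p : ℝ => Complex.exp (Complex.I * p * y) *
          a1op (fun a b => F (a, b)) ((x + p) / Real.sqrt 2) ((x - p) / Real.sqrt 2))
        = fun p : ℝ => (1/2 : ℂ) * ((x:ℂ) * (Complex.exp (Complex.I * p * y) * Ψ (x, p))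
            + (p:ℂ) * Complex.exp (Complex.I * p * y) * Ψ (x, p)
            + Complex.exp (Complex.I * p * y) * Ψ₁ (x, p)
            + Complex.exp (Complex.I * p * y) * Ψ₂ (x, p)) := by
      funext p
      rw [hpt1 p]
      ring
    have hA : Integrable (fun p : ℝ =>
        (x:ℂ) * (Complex.exp (Complex.I * p * y) * Ψ (x, p))) volume := hiS0.const_mul _
    have hAB : Integrable (fun p : ℝ =>
        (x:ℂ) * (Complex.exp (Complex.I * p * y) * Ψ (x, p))
          + (p:ℂ) * Complex.exp (Complex.I * p * y) * Ψ (x, p)) volume := hA.add hiSB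
    have hABC : Integrable (fun p : ℝ =>
        (x:ℂ) * (Complex.exp (Complex.I * p * y) * Ψ (x, p))
          + (p:ℂ) * Complex.exp (Complex.I * p * y) * Ψ (x, p)
          + Complex.exp (Complex.I * p * y) * Ψ₁ (x, p)) volume := hAB.add hiS1
    rw [hfun, integral_const_mul, integral_add hABC hiS2, integral_add hAB hiS1,
      integral_add hA hiSB, integral_const_mul, ← hI0, ← hI1, ← hI2, ← hIB]
  have hR2 : ExtW (a2op (fun a b => F (a, b))) x y
      = c * ((1/2 : ℂ) * ((x : ℂ) * I0 + (-1 : ℂ) * IB + I1 + (-1 : ℂ) * I2)) := by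
    rw [ExtW, ← hc]
    have hfun : (fun p : ℝ => Complex.exp (Complex.I * p * y) *
          a2op (fun a b => F (a, b)) ((x + p) / Real.sqrt 2) ((x - p) / Real.sqrt 2))
        = fun p : ℝ => (1/2 : ℂ) * ((x:ℂ) * (Complex.exp (Complex.I * p * y) * Ψ (x, p))
            + (-1 : ℂ) * ((p:ℂ) * Complex.exp (Complex.I * p * y) * Ψ (x, p))
            + Complex.exp (Complex.I * p * y) * Ψ₁ (x, p)
            + (-1 : ℂ) * (Complex.exp (Complex.I * p * y) * Ψ₂ (x, p))) := by
      funext p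
      rw [hpt2 p]
      ring
    have hA : Integrable (fun p : ℝ =>
        (x:ℂ) * (Complex.exp (Complex.I * p * y) * Ψ (x, p))) volume := hiS0.const_mul _
    have hB : Integrable (fun p : ℝ =>
        (-1 : ℂ) * ((p:ℂ) * Complex.exp (Complex.I * p * y) * Ψ (x, p))) volume :=
      hiSB.const_mul _
    have hD : Integrable (fun p : ℝ =>
        (-1 : ℂ) * (Complex.exp (Complex.I * p * y) * Ψ₂ (x, p))) volume := hiS2.const_mul _
    have hAB : Integrable (fun p : ℝ =>
        (x:ℂ) * (Complex.exp (Complex.I * p * y) * Ψ (x, p))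
          + (-1 : ℂ) * ((p:ℂ) * Complex.exp (Complex.I * p * y) * Ψ (x, p))) volume := hA.add hB
    have hABC : Integrable (fun p : ℝ =>
        (x:ℂ) * (Complex.exp (Complex.I * p * y) * Ψ (x, p))
          + (-1 : ℂ) * ((p:ℂ) * Complex.exp (Complex.I * p * y) * Ψ (x, p))
          + Complex.exp (Complex.I * p * y) * Ψ₁ (x, p)) volume := hAB.add hiS1
    rw [hfun, integral_const_mul, integral_add hABC hD, integral_add hAB hiS1,
      integral_add hA hB, integral_const_mul, integral_const_mul, integral_const_mul,
      ← hI0, ← hI1, ← hI2, ← hIB]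
  constructor
  · simp only [Apop]
    rw [hD1.deriv, hD2.deriv, hG, hR1, hIBP]
    linear_combination (-(1/2) * c * IB) * Complex.I_mul_I
  · simp only [Amop]
    rw [hD1.deriv, hD2.deriv, hG, hR2, hIBP]
    linear_combination ((1/2) * c * IB) * Complex.I_mul_I
end

section
/- The extended Wigner transform commutes with the two-dimensional harmonic oscillator: for every Schwartz function F : ℝ² → ℂ, H(W̃F) = W̃(HF), where H = (1/2)(−∂²/∂x² − ∂²/∂y² + x² + y²). -/
open MeasureTheory

/-- The 2D harmonic oscillator Hamiltonian H = (1/2)(−∂²/∂x² − ∂²/∂y² + x² + y²). -/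
noncomputable def Ham (G : ℝ → ℝ → ℂ) : ℝ → ℝ → ℂ :=
  fun x y => (1/2 : ℂ) *
    (-(deriv (deriv (fun t => G t y)) x) - deriv (deriv (fun t => G x t)) y
      + ((x : ℂ)^2 + (y : ℂ)^2) * G x y)

namespace ExtWAux
open Complex SchwartzMap Metric Filter

noncomputable section

abbrev E := ℝ × ℝ

def wpt (x p : ℝ) : E := ((x + p) / Real.sqrt 2, (x - p) / Real.sqrt 2)

def s2 : ℝ := (Real.sqrt 2)⁻¹

def dX : E := (s2, s2)
def dP : E := (s2, -s2)
def e1 : E := (1, 0)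
def e2 : E := (0, 1)

def evald (v : E) (G : SchwartzMap E ℂ) : SchwartzMap E ℂ :=
  SchwartzMap.evalCLM ℝ E ℂ v (SchwartzMap.fderivCLM ℝ E ℂ G)

lemma evald_apply (v : E) (G : SchwartzMap E ℂ) (w : E) :
    evald v G w = fderiv ℝ G w v := rfl

lemma norm_kernel (p ξ : ℝ) : ‖Complex.exp (Complex.I * p * ξ)‖ = 1 := by
  rw [show Complex.I * p * ξ = ((p * ξ : ℝ) : ℂ) * Complex.I by push_cast; ring]
  rw [Complex.norm_exp_ofReal_mul_I]

lemma abs_le_norm_wpt (x p : ℝ) : |p| ≤ 2 * ‖wpt x p‖ := by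
  have h2 : (0:ℝ) < Real.sqrt 2 := Real.sqrt_pos.2 (by norm_num)
  have hss : Real.sqrt 2 * Real.sqrt 2 = 2 := Real.mul_self_sqrt (by norm_num)
  have hab : (x + p) / Real.sqrt 2 - (x - p) / Real.sqrt 2 = Real.sqrt 2 * p := by
    rw [div_sub_div_same, div_eq_iff (ne_of_gt h2)]
    linear_combination (-p) * hss
  have h1 : (1:ℝ) ≤ Real.sqrt 2 := by nlinarith [Real.sqrt_nonneg 2]
  have hn : ‖wpt x p‖ = max |(x + p) / Real.sqrt 2| |(x - p) / Real.sqrt 2| := by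
    rw [wpt, Prod.norm_def, Real.norm_eq_abs, Real.norm_eq_abs]
  have hm1 : |(x + p) / Real.sqrt 2| ≤ ‖wpt x p‖ := hn ▸ le_max_left _ _
  have hm2 : |(x - p) / Real.sqrt 2| ≤ ‖wpt x p‖ := hn ▸ le_max_right _ _
  have habs : |(x + p) / Real.sqrt 2 - (x - p) / Real.sqrt 2| = Real.sqrt 2 * |p| := by
    rw [hab, abs_mul, abs_of_pos h2]
  have h3 : |(x + p) / Real.sqrt 2 - (x - p) / Real.sqrt 2|
      ≤ |(x + p) / Real.sqrt 2| + |(x - p) / Real.sqrt 2| := by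
    rw [sub_eq_add_neg]
    simpa [abs_neg] using abs_add_le ((x + p) / Real.sqrt 2) (-((x - p) / Real.sqrt 2))
  rw [habs] at h3
  nlinarith [abs_nonneg p]


lemma aux_pow (t : ℝ) (ht : 0 ≤ t) (k : ℕ) : (1+t)^k ≤ 2^k * (1 + t^k) := by
  rcases le_total t 1 with h|h
  · calc (1+t)^k ≤ 2^k := by
          apply pow_le_pow_left₀ (by positivity) (by linarith)
        _ ≤ 2^k*(1+t^k) := by
          nlinarith [pow_nonneg ht k, pow_pos (show (0:ℝ) < 2 by norm_num) k]
  · calc (1+t)^k ≤ (2*t)^k := by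
          apply pow_le_pow_left₀ (by positivity) (by linarith)
        _ = 2^k*t^k := mul_pow 2 t k
        _ ≤ 2^k*(1+t^k) := by
          nlinarith [pow_pos (show (0:ℝ) < 2 by norm_num) k]

lemma decay_bound (G : SchwartzMap E ℂ) (k : ℕ) :
    ∃ C : ℝ, 0 < C ∧ ∀ x p : ℝ, (1 + |p|) ^ k * ‖G (wpt x p)‖ ≤ C := by
  obtain ⟨C0, hC0, h0⟩ := G.decay 0 0
  obtain ⟨Ck, hCk, hk⟩ := G.decay k 0
  refine ⟨2^k * (2^k * (C0 + Ck)), by positivity, fun x p => ?_⟩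
  set w := wpt x p with hw
  have hb0 : ‖G w‖ ≤ C0 := by simpa [norm_iteratedFDeriv_zero] using h0 w
  have hbk : ‖w‖ ^ k * ‖G w‖ ≤ Ck := by simpa [norm_iteratedFDeriv_zero] using hk w
  have hp : |p| ≤ 2 * ‖w‖ := abs_le_norm_wpt x p
  have h1 : (1 + |p|) ^ k ≤ (2 * (1 + ‖w‖)) ^ k := by
    apply pow_le_pow_left₀ (by positivity)
    nlinarith [norm_nonneg w]
  have h2 : (1 + ‖w‖) ^ k ≤ 2^k * (1 + ‖w‖^k) := aux_pow ‖w‖ (norm_nonneg w) k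
  have hGnn : (0:ℝ) ≤ ‖G w‖ := norm_nonneg _
  calc (1 + |p|) ^ k * ‖G w‖ ≤ (2 * (1 + ‖w‖)) ^ k * ‖G w‖ := by
        exact mul_le_mul_of_nonneg_right h1 hGnn
    _ = 2^k * ((1 + ‖w‖)^k * ‖G w‖) := by rw [mul_pow]; ring
    _ ≤ 2^k * ((2^k * (1 + ‖w‖^k)) * ‖G w‖) := by
        have := mul_le_mul_of_nonneg_right h2 hGnn
        have h2k : (0:ℝ) ≤ 2^k := by positivity
        nlinarith
    _ = 2^k * (2^k * (‖G w‖ + ‖w‖^k * ‖G w‖)) := by ring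
    _ ≤ 2^k * (2^k * (C0 + Ck)) := by gcongr

lemma bound_step {C z : ℝ} (hz : 0 ≤ z) (p : ℝ) (h : (1+|p|)^2 * z ≤ C) :
    z ≤ C * (1+p^2)⁻¹ := by
  have h1 : (0:ℝ) < 1 + p^2 := by positivity
  rw [mul_comm, inv_mul_eq_div, le_div_iff₀ h1]
  nlinarith [abs_nonneg p, _root_.sq_abs p, mul_le_mul_of_nonneg_left (le_refl (1+p^2)) hz]

lemma integrable_aux {f : ℝ → ℂ} (hf : Continuous f) {C : ℝ}
    (h : ∀ p, (1 + |p|) ^ 2 * ‖f p‖ ≤ C) : Integrable f := by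
  refine (integrable_inv_one_add_sq.const_mul C).mono' hf.aestronglyMeasurable ?_
  filter_upwards with p
  exact bound_step (norm_nonneg _) p (h p)

lemma cont_kernel (ξ : ℝ) : Continuous fun p : ℝ => Complex.exp (Complex.I * p * ξ) :=
  Complex.continuous_exp.comp
    (((continuous_const.mul Complex.continuous_ofReal).mul continuous_const))

lemma cont_wpt (x : ℝ) : Continuous fun p : ℝ => wpt x p := by
  unfold wpt; fun_prop

lemma cont_wpt' (p : ℝ) : Continuous fun x : ℝ => wpt x p := by
  unfold wpt; fun_prop

lemma hasDerivAt_comp_x (G : SchwartzMap E ℂ) (p x : ℝ) :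
    HasDerivAt (fun t => G (wpt t p)) (evald dX G (wpt x p)) x := by
  have hin : HasDerivAt (fun t => wpt t p) dX x := by
    have ha : HasDerivAt (fun t : ℝ => (t + p) / Real.sqrt 2) s2 x := by
      simpa [s2, one_div] using ((hasDerivAt_id x).add_const p).div_const (Real.sqrt 2)
    have hb : HasDerivAt (fun t : ℝ => (t - p) / Real.sqrt 2) s2 x := by
      simpa [s2, one_div] using ((hasDerivAt_id x).sub_const p).div_const (Real.sqrt 2)
    exact ha.prodMk hb
  have hG := (G.differentiableAt (x := wpt x p)).hasFDerivAt
  exact hG.comp_hasDerivAt x hin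

lemma hasDerivAt_comp_p (G : SchwartzMap E ℂ) (x p : ℝ) :
    HasDerivAt (fun q => G (wpt x q)) (evald dP G (wpt x p)) p := by
  have hin : HasDerivAt (fun q => wpt x q) dP p := by
    have ha : HasDerivAt (fun q : ℝ => (x + q) / Real.sqrt 2) s2 p := by
      simpa [s2, one_div] using ((hasDerivAt_id p).const_add x).div_const (Real.sqrt 2)
    have hb : HasDerivAt (fun q : ℝ => (x - q) / Real.sqrt 2) (-s2) p := by
      simpa [s2, one_div, neg_div] using (((hasDerivAt_id p).const_sub x)).div_const (Real.sqrt 2)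
    exact ha.prodMk hb
  have hG := (G.differentiableAt (x := wpt x p)).hasFDerivAt
  exact hG.comp_hasDerivAt p hin


lemma hasDerivAt_kernel (p ξ : ℝ) :
    HasDerivAt (fun s : ℝ => Complex.exp (Complex.I * p * s))
      (Complex.exp (Complex.I * p * ξ) * (Complex.I * p)) ξ := by
  have h0 : HasDerivAt (fun s : ℝ => Complex.I * p * (s : ℂ)) (Complex.I * p) ξ := by
    simpa using (Complex.ofRealCLM.hasDerivAt (x := ξ)).const_mul (Complex.I * p)
  exact h0.cexp

lemma hasDerivAt_int_xi {g : ℝ → ℂ} (hgc : Continuous g)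
    (h1 : Integrable g) (h2 : Integrable fun p : ℝ => (p : ℂ) * g p) (ξ : ℝ) :
    HasDerivAt (fun s : ℝ => ∫ p : ℝ, Complex.exp (Complex.I * p * s) * g p)
      (∫ p : ℝ, Complex.I * p * Complex.exp (Complex.I * p * ξ) * g p) ξ := by
  have key := hasDerivAt_integral_of_dominated_loc_of_deriv_le (μ := volume) (x₀ := ξ)
    (F := fun (s : ℝ) (p : ℝ) => Complex.exp (Complex.I * p * s) * g p)
    (F' := fun (s : ℝ) (p : ℝ) => Complex.I * p * Complex.exp (Complex.I * p * s) * g p)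
    (bound := fun p : ℝ => ‖(p:ℂ) * g p‖) (Metric.ball_mem_nhds ξ one_pos)
    (Eventually.of_forall fun s => ((cont_kernel s).mul hgc).aestronglyMeasurable)
    (h1.bdd_mul (cont_kernel ξ).aestronglyMeasurable
      (Eventually.of_forall fun p => le_of_eq (norm_kernel p ξ)))
    ((((continuous_const.mul Complex.continuous_ofReal).mul (cont_kernel ξ)).mul
      hgc).aestronglyMeasurable)
    (Eventually.of_forall fun (p : ℝ) => fun (s : ℝ) _ => by
      simp [norm_mul, norm_kernel p s])
    h2.norm
    (Eventually.of_forall fun (p : ℝ) => fun (s : ℝ) _ => by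
      have := (hasDerivAt_kernel p s).mul_const (g p)
      rw [show Complex.I * p * Complex.exp (Complex.I * p * s) * g p
          = Complex.exp (Complex.I * p * s) * (Complex.I * p) * g p by ring]
      exact this)
  exact key.2

lemma hasDerivAt_int_x (G : SchwartzMap E ℂ) (ξ x : ℝ) :
    HasDerivAt (fun t => ∫ p : ℝ, Complex.exp (Complex.I * p * ξ) * G (wpt t p))
      (∫ p : ℝ, Complex.exp (Complex.I * p * ξ) * (evald dX G) (wpt x p)) x := by
  obtain ⟨C, hC, hCb⟩ := decay_bound (evald dX G) 2
  obtain ⟨C2, hC2, hC2b⟩ := decay_bound G 2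
  have key := hasDerivAt_integral_of_dominated_loc_of_deriv_le (μ := volume) (x₀ := x)
    (F := fun (t : ℝ) (p : ℝ) => Complex.exp (Complex.I * p * ξ) * G (wpt t p))
    (F' := fun (t : ℝ) (p : ℝ) => Complex.exp (Complex.I * p * ξ) * (evald dX G) (wpt t p))
    (bound := fun p => C * (1 + p^2)⁻¹) (Metric.ball_mem_nhds x one_pos)
    (Eventually.of_forall fun t =>
      ((cont_kernel ξ).mul (G.continuous.comp (cont_wpt t))).aestronglyMeasurable)
    (integrable_aux ((cont_kernel ξ).mul (G.continuous.comp (cont_wpt x)))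
      (fun p => by rw [norm_mul, norm_kernel, one_mul]; exact hC2b x p))
    (((cont_kernel ξ).mul
      ((evald dX G).continuous.comp (cont_wpt x))).aestronglyMeasurable)
    (Eventually.of_forall fun (p : ℝ) => fun (t : ℝ) _ => by
      rw [norm_mul, norm_kernel, one_mul]
      exact bound_step (norm_nonneg _) p (hCb t p))
    (integrable_inv_one_add_sq.const_mul C)
    (Eventually.of_forall fun (p : ℝ) => fun (t : ℝ) _ =>
      (hasDerivAt_comp_x G p t).const_mul (Complex.exp (Complex.I * p * ξ)))
  exact key.2

lemma ibp (H : SchwartzMap E ℂ) (x ξ : ℝ) :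
    ∫ p : ℝ, Complex.exp (Complex.I * p * ξ) * (evald dP H) (wpt x p)
      = -(Complex.I * ξ) * ∫ p : ℝ, Complex.exp (Complex.I * p * ξ) * H (wpt x p) := by
  obtain ⟨CH, _, hH⟩ := decay_bound H 2
  obtain ⟨CP, _, hP⟩ := decay_bound (evald dP H) 2
  have hu : ∀ p : ℝ, HasDerivAt (fun q : ℝ => Complex.exp (Complex.I * q * ξ))
      (Complex.I * ξ * Complex.exp (Complex.I * p * ξ)) p := by
    intro p
    have h0 : HasDerivAt (fun q : ℝ => Complex.I * (q : ℂ) * ξ) (Complex.I * ξ) p := by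
      have := (Complex.ofRealCLM.hasDerivAt (x := p)).const_mul Complex.I
      have h2 := this.mul_const (ξ : ℂ)
      simpa using h2
    have := h0.cexp
    convert this using 1
    ring
  have hv : ∀ p : ℝ, HasDerivAt (fun q => H (wpt x q)) ((evald dP H) (wpt x p)) p :=
    fun p => hasDerivAt_comp_p H x p
  have huv' : Integrable (fun p : ℝ => Complex.exp (Complex.I * p * ξ) *
      (evald dP H) (wpt x p)) := integrable_aux
    ((cont_kernel ξ).mul ((evald dP H).continuous.comp (cont_wpt x)))
    (fun p => by rw [norm_mul, norm_kernel, one_mul]; exact hP x p)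
  have hu'v : Integrable (fun p : ℝ => (Complex.I * ξ * Complex.exp (Complex.I * p * ξ)) *
      H (wpt x p)) := by
    apply integrable_aux (((continuous_const.mul (cont_kernel ξ))).mul
      (H.continuous.comp (cont_wpt x)))
    intro p
    show (1 + |p|)^2 * ‖(Complex.I * ξ * Complex.exp (Complex.I * p * ξ)) * H (wpt x p)‖ ≤ _
    rw [norm_mul, norm_mul, norm_kernel, mul_one]
    calc (1 + |p|)^2 * (‖Complex.I * (ξ:ℂ)‖ * ‖H (wpt x p)‖)
        = ‖Complex.I * (ξ:ℂ)‖ * ((1 + |p|)^2 * ‖H (wpt x p)‖) := by ring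
      _ ≤ ‖Complex.I * (ξ:ℂ)‖ * CH := by
          exact mul_le_mul_of_nonneg_left (hH x p) (norm_nonneg _)
  have huv : Integrable (fun p : ℝ => Complex.exp (Complex.I * p * ξ) * H (wpt x p)) :=
    integrable_aux ((cont_kernel ξ).mul (H.continuous.comp (cont_wpt x)))
      (fun p => by rw [norm_mul, norm_kernel, one_mul]; exact hH x p)
  have key := integral_mul_deriv_eq_deriv_mul_of_integrable
    (u := fun q : ℝ => Complex.exp (Complex.I * q * ξ))
    (v := fun q : ℝ => H (wpt x q))
    (u' := fun p : ℝ => Complex.I * ξ * Complex.exp (Complex.I * p * ξ))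
    (v' := fun p : ℝ => (evald dP H) (wpt x p))
    (fun p _ => hu p) (fun p _ => hv p) (by simpa [Pi.mul_def] using huv') (by simpa [Pi.mul_def] using hu'v)
    (by simpa [Pi.mul_def] using huv)
  rw [key, ← integral_const_mul, ← integral_neg]
  apply integral_congr_ae
  filter_upwards with p
  ring


lemma coe_fderiv (G : SchwartzMap E ℂ) :
    (fun z => fderiv ℝ G z) = ⇑(SchwartzMap.fderivCLM ℝ E ℂ G) := by
  funext z; rw [SchwartzMap.fderivCLM_apply]

lemma evald_evald (G : SchwartzMap E ℂ) (a b : E) (w : E) :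
    evald a (evald b G) w = fderiv ℝ (fderiv ℝ G) w a b := by
  rw [evald_apply]
  have hcoe : ⇑(evald b G) = fun z => (fderiv ℝ G z) b := by
    funext z; rw [evald_apply]
  rw [hcoe]
  have hdiff : DifferentiableAt ℝ (fun z => fderiv ℝ G z) w := by
    rw [coe_fderiv]
    exact (SchwartzMap.fderivCLM ℝ E ℂ G).differentiableAt
  rw [fderiv_clm_apply hdiff (differentiableAt_const b)]
  simp

lemma second_sum (G : SchwartzMap E ℂ) (w : E) :
    evald dX (evald dX G) w + evald dP (evald dP G) w
      = evald e1 (evald e1 G) w + evald e2 (evald e2 G) w := by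
  rw [evald_evald, evald_evald, evald_evald, evald_evald]
  set Q := fderiv ℝ (fderiv ℝ (⇑G)) w with hQ
  have hdX : dX = s2 • e1 + s2 • e2 := by
    simp [dX, e1, e2, Prod.ext_iff, Prod.smul_def, s2]
  have hdP : dP = s2 • e1 - s2 • e2 := by
    simp [dP, e1, e2, Prod.ext_iff, Prod.smul_def, s2]
  have hs : s2 * s2 = (2:ℝ)⁻¹ := by
    rw [s2, ← mul_inv, Real.mul_self_sqrt (by norm_num)]
  rw [hdX, hdP]
  simp only [map_add, map_sub, _root_.map_smul, ContinuousLinearMap.add_apply,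
    ContinuousLinearMap.sub_apply, ContinuousLinearMap.smul_apply, smul_smul, hs]
  have hs' : s2 ^ 2 = 2⁻¹ := by rw [sq]; exact hs
  match_scalars <;> first | ring1 | linear_combination 2 * hs


lemma hasDerivAt_slice1 (G : SchwartzMap E ℂ) (b t : ℝ) :
    HasDerivAt (fun t : ℝ => G (t, b)) (evald e1 G (t, b)) t := by
  have hin : HasDerivAt (fun t : ℝ => ((t, b) : E)) e1 t :=
    (hasDerivAt_id t).prodMk (hasDerivAt_const t b)
  have hG := (G.differentiableAt (x := ((t, b) : E))).hasFDerivAt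
  exact hG.comp_hasDerivAt t hin

lemma hasDerivAt_slice2 (G : SchwartzMap E ℂ) (a t : ℝ) :
    HasDerivAt (fun t : ℝ => G (a, t)) (evald e2 G (a, t)) t := by
  have hin : HasDerivAt (fun t : ℝ => ((a, t) : E)) e2 t :=
    (hasDerivAt_const t a).prodMk (hasDerivAt_id t)
  have hG := (G.differentiableAt (x := ((a, t) : E))).hasFDerivAt
  exact hG.comp_hasDerivAt t hin

lemma deriv_deriv_slice1 (G : SchwartzMap E ℂ) (a b : ℝ) :
    deriv (deriv (fun t : ℝ => G (t, b))) a = evald e1 (evald e1 G) (a, b) := by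
  have h1 : deriv (fun t : ℝ => G (t, b)) = fun t => evald e1 G (t, b) :=
    funext fun t => (hasDerivAt_slice1 G b t).deriv
  rw [h1]
  exact (hasDerivAt_slice1 (evald e1 G) b a).deriv

lemma deriv_deriv_slice2 (G : SchwartzMap E ℂ) (a b : ℝ) :
    deriv (deriv (fun t : ℝ => G (a, t))) b = evald e2 (evald e2 G) (a, b) := by
  have h1 : deriv (fun t : ℝ => G (a, t)) = fun t => evald e2 G (a, t) :=
    funext fun t => (hasDerivAt_slice2 G a t).deriv
  rw [h1]
  exact (hasDerivAt_slice2 (evald e2 G) a b).deriv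


lemma main_aux (F : SchwartzMap E ℂ) (c : ℂ) (x y : ℝ) :
    (1/2 : ℂ) * (-(deriv (deriv (fun t : ℝ => c * ∫ p : ℝ, Complex.exp (Complex.I*p*y) * F (wpt t p))) x)
      - deriv (deriv (fun s : ℝ => c * ∫ p : ℝ, Complex.exp (Complex.I*p*s) * F (wpt x p))) y
      + ((x:ℂ)^2 + (y:ℂ)^2) * (c * ∫ p : ℝ, Complex.exp (Complex.I*p*y) * F (wpt x p)))
    = c * ∫ p : ℝ, Complex.exp (Complex.I*p*y) *
        ((1/2 : ℂ) * (-(evald e1 (evald e1 F)) (wpt x p) - (evald e2 (evald e2 F)) (wpt x p)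
          + (((((x+p)/Real.sqrt 2 : ℝ) : ℂ))^2 + ((((x-p)/Real.sqrt 2 : ℝ) : ℂ))^2) * F (wpt x p))) := by
  have hss : Real.sqrt 2 ^ 2 = 2 := Real.sq_sqrt (by norm_num)
  obtain ⟨C2, _, hb2⟩ := decay_bound F 2
  obtain ⟨C3, _, hb3⟩ := decay_bound F 3
  obtain ⟨C4, _, hb4⟩ := decay_bound F 4
  obtain ⟨CA, _, hbA⟩ := decay_bound (evald dX (evald dX F)) 2
  obtain ⟨CB, _, hbB⟩ := decay_bound (evald dP (evald dP F)) 2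
  have hg0c : Continuous fun p : ℝ => F (wpt x p) := F.continuous.comp (cont_wpt x)
  have hkc : Continuous fun p : ℝ => Complex.exp (Complex.I*p*y) := cont_kernel y
  have hnormp : ∀ p : ℝ, ‖((p:ℝ):ℂ)‖ = |p| := fun p => by simp
  have hg0i : Integrable (fun p : ℝ => F (wpt x p)) := integrable_aux hg0c fun p => hb2 x p
  have hpg0i : Integrable (fun p : ℝ => (p:ℂ) * F (wpt x p)) := by
    apply integrable_aux (Complex.continuous_ofReal.mul hg0c) (C := C3)
    intro p
    show (1 + |p|)^2 * ‖(p:ℂ) * F (wpt x p)‖ ≤ C3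
    rw [norm_mul, hnormp]
    have h := hb3 x p
    nlinarith [abs_nonneg p, norm_nonneg (F (wpt x p)),
      mul_nonneg (abs_nonneg p) (norm_nonneg (F (wpt x p))),
      mul_nonneg (mul_nonneg (abs_nonneg p) (abs_nonneg p)) (norm_nonneg (F (wpt x p)))]
  have hg1c : Continuous fun p : ℝ => Complex.I * p * F (wpt x p) :=
    (continuous_const.mul Complex.continuous_ofReal).mul hg0c
  have hg1norm : ∀ p : ℝ, ‖Complex.I * p * F (wpt x p)‖ = |p| * ‖F (wpt x p)‖ := fun p => by
    simp [norm_mul]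
  have hg1i : Integrable (fun p : ℝ => Complex.I * p * F (wpt x p)) := by
    apply integrable_aux hg1c (C := C3)
    intro p
    rw [hg1norm]
    have h := hb3 x p
    nlinarith [abs_nonneg p, norm_nonneg (F (wpt x p)),
      mul_nonneg (abs_nonneg p) (norm_nonneg (F (wpt x p))),
      mul_nonneg (mul_nonneg (abs_nonneg p) (abs_nonneg p)) (norm_nonneg (F (wpt x p)))]
  have hpg1i : Integrable (fun p : ℝ => (p:ℂ) * (Complex.I * p * F (wpt x p))) := by
    apply integrable_aux (Complex.continuous_ofReal.mul hg1c) (C := C4)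
    intro p
    show (1 + |p|)^2 * ‖(p:ℂ) * (Complex.I * p * F (wpt x p))‖ ≤ C4
    rw [norm_mul, hnormp, hg1norm]
    have h := hb4 x p
    nlinarith [abs_nonneg p, norm_nonneg (F (wpt x p)),
      mul_nonneg (abs_nonneg p) (norm_nonneg (F (wpt x p))),
      mul_nonneg (mul_nonneg (abs_nonneg p) (abs_nonneg p)) (norm_nonneg (F (wpt x p))),
      mul_nonneg (mul_nonneg (mul_nonneg (abs_nonneg p) (abs_nonneg p)) (abs_nonneg p))
        (norm_nonneg (F (wpt x p)))]
  have hiJ : Integrable (fun p : ℝ => (p:ℂ)^2 * (Complex.exp (Complex.I*p*y) * F (wpt x p))) := by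
    apply integrable_aux ((Complex.continuous_ofReal.pow 2).mul (hkc.mul hg0c)) (C := C4)
    intro p
    show (1 + |p|)^2 * ‖(p:ℂ)^2 * (Complex.exp (Complex.I*p*y) * F (wpt x p))‖ ≤ C4
    rw [norm_mul, norm_mul, norm_kernel, one_mul, norm_pow, hnormp]
    have h := hb4 x p
    nlinarith [abs_nonneg p, norm_nonneg (F (wpt x p)),
      mul_nonneg (abs_nonneg p) (norm_nonneg (F (wpt x p))),
      mul_nonneg (mul_nonneg (abs_nonneg p) (abs_nonneg p)) (norm_nonneg (F (wpt x p))),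
      mul_nonneg (mul_nonneg (mul_nonneg (abs_nonneg p) (abs_nonneg p)) (abs_nonneg p))
        (norm_nonneg (F (wpt x p)))]
  have hiA : Integrable (fun p : ℝ =>
      Complex.exp (Complex.I*p*y) * (evald dX (evald dX F)) (wpt x p)) :=
    integrable_aux (hkc.mul ((evald dX (evald dX F)).continuous.comp (cont_wpt x)))
      (fun p => by rw [norm_mul, norm_kernel, one_mul]; exact hbA x p)
  have hiB : Integrable (fun p : ℝ =>
      Complex.exp (Complex.I*p*y) * (evald dP (evald dP F)) (wpt x p)) :=
    integrable_aux (hkc.mul ((evald dP (evald dP F)).continuous.comp (cont_wpt x)))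
      (fun p => by rw [norm_mul, norm_kernel, one_mul]; exact hbB x p)
  have hiI3 : Integrable (fun p : ℝ => Complex.exp (Complex.I*p*y) * F (wpt x p)) :=
    integrable_aux (hkc.mul hg0c) (fun p => by rw [norm_mul, norm_kernel, one_mul]; exact hb2 x p)
  have hD2x : deriv (deriv (fun t : ℝ => c * ∫ p : ℝ, Complex.exp (Complex.I*p*y) * F (wpt t p))) x
      = c * ∫ p : ℝ, Complex.exp (Complex.I*p*y) * (evald dX (evald dX F)) (wpt x p) := by
    have h1 : deriv (fun t : ℝ => c * ∫ p : ℝ, Complex.exp (Complex.I*p*y) * F (wpt t p))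
        = fun t => c * ∫ p : ℝ, Complex.exp (Complex.I*p*y) * (evald dX F) (wpt t p) :=
      funext fun t => (HasDerivAt.const_mul c (hasDerivAt_int_x F y t)).deriv
    rw [h1]
    exact (HasDerivAt.const_mul c (hasDerivAt_int_x (evald dX F) y x)).deriv
  have hD2y : deriv (deriv (fun s : ℝ => c * ∫ p : ℝ, Complex.exp (Complex.I*p*s) * F (wpt x p))) y
      = c * ∫ p : ℝ, Complex.I*p*Complex.exp (Complex.I*p*y) * (Complex.I*p*F (wpt x p)) := by
    have h1 : deriv (fun s : ℝ => c * ∫ p : ℝ, Complex.exp (Complex.I*p*s) * F (wpt x p))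
        = fun s : ℝ => c * ∫ p : ℝ, Complex.exp (Complex.I*p*s) * (Complex.I*p*F (wpt x p)) := by
      funext s
      rw [(HasDerivAt.const_mul c (hasDerivAt_int_xi hg0c hg0i hpg0i s)).deriv]
      congr 1
      exact integral_congr_ae (Eventually.of_forall fun p => by ring)
    rw [h1]
    exact (HasDerivAt.const_mul c (hasDerivAt_int_xi hg1c hg1i hpg1i y)).deriv
  have hI4 : (∫ p : ℝ, Complex.exp (Complex.I*p*y) * (evald dP (evald dP F)) (wpt x p))
      = -((y:ℂ)^2) * ∫ p : ℝ, Complex.exp (Complex.I*p*y) * F (wpt x p) := by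
    rw [ibp (evald dP F) x y, ibp F x y]
    linear_combination ((y:ℂ)^2 * ∫ p : ℝ, Complex.exp (Complex.I*p*y) * F (wpt x p))
      * Complex.I_mul_I
  have hI2 : (∫ p : ℝ, Complex.I*p*Complex.exp (Complex.I*p*y) * (Complex.I*p*F (wpt x p)))
      = - ∫ p : ℝ, (p:ℂ)^2 * (Complex.exp (Complex.I*p*y) * F (wpt x p)) := by
    rw [← integral_neg]
    exact integral_congr_ae (Eventually.of_forall fun p => by
      linear_combination ((p:ℂ)^2 * Complex.exp (Complex.I*p*y) * F (wpt x p)) * Complex.I_mul_I)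
  have hRHS : (∫ p : ℝ, Complex.exp (Complex.I*p*y) *
        ((1/2 : ℂ) * (-(evald e1 (evald e1 F)) (wpt x p) - (evald e2 (evald e2 F)) (wpt x p)
          + (((((x+p)/Real.sqrt 2 : ℝ) : ℂ))^2 + ((((x-p)/Real.sqrt 2 : ℝ) : ℂ))^2) * F (wpt x p))))
      = (1/2 : ℂ) * ((-(∫ p : ℝ, Complex.exp (Complex.I*p*y) * (evald dX (evald dX F)) (wpt x p))
            + -(∫ p : ℝ, Complex.exp (Complex.I*p*y) * (evald dP (evald dP F)) (wpt x p)))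
          + ((x:ℂ)^2 * (∫ p : ℝ, Complex.exp (Complex.I*p*y) * F (wpt x p))
             + ∫ p : ℝ, (p:ℂ)^2 * (Complex.exp (Complex.I*p*y) * F (wpt x p)))) := by
    have hpt : ∀ p : ℝ, Complex.exp (Complex.I*p*y) *
        ((1/2 : ℂ) * (-(evald e1 (evald e1 F)) (wpt x p) - (evald e2 (evald e2 F)) (wpt x p)
          + (((((x+p)/Real.sqrt 2 : ℝ) : ℂ))^2 + ((((x-p)/Real.sqrt 2 : ℝ) : ℂ))^2) * F (wpt x p)))
        = (1/2 : ℂ) * (((-(Complex.exp (Complex.I*p*y) * (evald dX (evald dX F)) (wpt x p)))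
            + (-(Complex.exp (Complex.I*p*y) * (evald dP (evald dP F)) (wpt x p))))
          + ((x:ℂ)^2 * (Complex.exp (Complex.I*p*y) * F (wpt x p))
             + (p:ℂ)^2 * (Complex.exp (Complex.I*p*y) * F (wpt x p)))) := by
      intro p
      have hr : ((x+p)/Real.sqrt 2)^2 + ((x-p)/Real.sqrt 2)^2 = x^2 + p^2 := by
        rw [div_pow, div_pow, hss]; ring
      have hcast : (((((x+p)/Real.sqrt 2 : ℝ) : ℂ))^2 + ((((x-p)/Real.sqrt 2 : ℝ) : ℂ))^2)
          = (x:ℂ)^2 + (p:ℂ)^2 := by exact_mod_cast congrArg Complex.ofReal hr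
      rw [hcast]
      linear_combination (Complex.exp (Complex.I*p*y) / 2) * (second_sum F (wpt x p))
    rw [integral_congr_ae (Eventually.of_forall hpt)]
    rw [integral_const_mul]
    congr 1
    have hnA : Integrable (fun p : ℝ =>
        -(Complex.exp (Complex.I*p*y) * (evald dX (evald dX F)) (wpt x p))) := hiA.neg
    have hnB : Integrable (fun p : ℝ =>
        -(Complex.exp (Complex.I*p*y) * (evald dP (evald dP F)) (wpt x p))) := hiB.neg
    have hx3 : Integrable (fun p : ℝ =>
        (x:ℂ)^2 * (Complex.exp (Complex.I*p*y) * F (wpt x p))) := hiI3.const_mul ((x:ℂ)^2)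
    have hf1 : Integrable (fun p : ℝ =>
        -(Complex.exp (Complex.I*p*y) * (evald dX (evald dX F)) (wpt x p))
        + -(Complex.exp (Complex.I*p*y) * (evald dP (evald dP F)) (wpt x p))) := hnA.add hnB
    have hf2 : Integrable (fun p : ℝ =>
        (x:ℂ)^2 * (Complex.exp (Complex.I*p*y) * F (wpt x p))
        + (p:ℂ)^2 * (Complex.exp (Complex.I*p*y) * F (wpt x p))) := hx3.add hiJ
    rw [integral_add hf1 hf2, integral_add hnA hnB, integral_neg, integral_neg,
      integral_add hx3 hiJ, integral_const_mul]
  rw [hD2x, hD2y, hI2, hRHS, hI4]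
  ring

end
end ExtWAux

open ExtWAux Complex Filter

/-- The extended Wigner transform commutes with the harmonic oscillator. -/
theorem extW_commute_ham (F : SchwartzMap (ℝ × ℝ) ℂ) (x y : ℝ) :
    Ham (ExtW (fun a b => F (a, b))) x y
      = ExtW (Ham (fun a b => F (a, b))) x y := by
  have hmain := ExtWAux.main_aux F ((Real.sqrt (2 * Real.pi) : ℂ))⁻¹ x y
  have hL : Ham (ExtW (fun a b => F (a, b))) x y
      = (1/2 : ℂ) * (-(deriv (deriv (fun t : ℝ => (Real.sqrt (2 * Real.pi) : ℂ)⁻¹ *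
            ∫ p : ℝ, Complex.exp (Complex.I*p*y) * F (wpt t p))) x)
        - deriv (deriv (fun s : ℝ => (Real.sqrt (2 * Real.pi) : ℂ)⁻¹ *
            ∫ p : ℝ, Complex.exp (Complex.I*p*s) * F (wpt x p))) y
        + ((x:ℂ)^2 + (y:ℂ)^2) * ((Real.sqrt (2 * Real.pi) : ℂ)⁻¹ *
            ∫ p : ℝ, Complex.exp (Complex.I*p*y) * F (wpt x p))) := rfl
  have hR : ExtW (Ham (fun a b => F (a, b))) x y
      = (Real.sqrt (2 * Real.pi) : ℂ)⁻¹ * ∫ p : ℝ, Complex.exp (Complex.I*p*y) *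
          ((1/2 : ℂ) * (-(evald e1 (evald e1 F)) (wpt x p) - (evald e2 (evald e2 F)) (wpt x p)
            + (((((x+p)/Real.sqrt 2 : ℝ) : ℂ))^2 + ((((x-p)/Real.sqrt 2 : ℝ) : ℂ))^2)
              * F (wpt x p))) := by
    show (Real.sqrt (2 * Real.pi) : ℂ)⁻¹ * (∫ p : ℝ, Complex.exp (Complex.I*p*y) *
        Ham (fun a b => F (a, b)) ((x+p)/Real.sqrt 2) ((x-p)/Real.sqrt 2)) = _
    congr 1
    apply MeasureTheory.integral_congr_ae
    filter_upwards with p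
    congr 1
    show (1/2 : ℂ) * (-(deriv (deriv (fun t : ℝ => F (t, (x-p)/Real.sqrt 2))) ((x+p)/Real.sqrt 2))
        - deriv (deriv (fun t : ℝ => F ((x+p)/Real.sqrt 2, t))) ((x-p)/Real.sqrt 2)
        + (((((x+p)/Real.sqrt 2 : ℝ) : ℂ))^2 + ((((x-p)/Real.sqrt 2 : ℝ) : ℂ))^2)
          * F ((x+p)/Real.sqrt 2, (x-p)/Real.sqrt 2)) = _
    rw [ExtWAux.deriv_deriv_slice1, ExtWAux.deriv_deriv_slice2]
    rfl
  rw [hL, hR]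
  exact hmain
end
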